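/- arXiv:2305.07875 — 5 statements merged into one kernel-verified Lean document; each statement's English description precedes it below -/
import Mathlib

section
/- Let L = {0,1} and consider a constrained switched linear system (CSS) over L with matrices A_l ∈ ℝ^{n×n}, B_l ∈ ℝ^{n×q}, C_l ∈ ℝ^{p×n}, D_l ∈ ℝ^{p×q}, and let G = (V,E) be a switching graph over L. Suppose γ > 0 and there exist symmetric matrices S_i ∈ ℝ^{n×n} and matrices G_i ∈ ℝ^{n×n} for each node i ∈ V such that for every edge (i,j,l) ∈ E the 4×4 block matrix [[G_i + G_iᵀ − S_i, 0, (A_l G_i)ᵀ, (C_l G_i)ᵀ], [0, γ I_q, B_lᵀ, D_lᵀ], [A_l G_i, B_l, S_j, 0], [C_l G_i, D_l, 0, γ I_p]] is positive definite. Then the CSS has ℓ2-performance with gain γ with respect to the set of switching sequences admissible for G. -/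
open Matrix Filter Topology

lemma dotProduct_self_nonneg' {I : Type*} [Fintype I] (v : I → ℝ) : 0 ≤ v ⬝ᵥ v :=
  Finset.sum_nonneg fun i _ => mul_self_nonneg _

lemma posdef_margin {I : Type*} [Fintype I] [DecidableEq I] {M : Matrix I I ℝ}
    (hM : M.PosDef) : ∃ ε > 0, ∀ v : I → ℝ, ε * (v ⬝ᵥ v) ≤ v ⬝ᵥ M *ᵥ v := by
  classical
  by_cases hI : Nonempty I
  · set f : (I → ℝ) → ℝ := fun v => v ⬝ᵥ M *ᵥ v with hfdef
    have hf : Continuous f := by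
      have : f = fun v => ∑ i, v i * ∑ j, M i j * v j := by
        funext v; simp [hfdef, dotProduct, Matrix.mulVec, dotProduct]
      rw [this]
      exact continuous_finset_sum _ fun i _ => (continuous_apply i).mul
        (continuous_finset_sum _ fun j _ => continuous_const.mul (continuous_apply j))
    have hsph : IsCompact (Metric.sphere (0 : I → ℝ) 1) := isCompact_sphere _ _
    have hne : (Metric.sphere (0 : I → ℝ) 1).Nonempty := by
      refine ⟨fun _ => 1, ?_⟩
      simp only [Metric.mem_sphere, dist_zero_right]
      rw [pi_norm_const]
      simp
    obtain ⟨v₀, hv₀mem, hv₀min⟩ := hsph.exists_isMinOn hne hf.continuousOn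
    have hv₀norm : ‖v₀‖ = 1 := by simpa [dist_zero_right] using hv₀mem
    have hv₀ne : v₀ ≠ 0 := by intro h; rw [h] at hv₀norm; simp at hv₀norm
    have hε' : 0 < f v₀ := by
      have := hM.dotProduct_mulVec_pos hv₀ne
      simpa [hfdef] using this
    set ε' := f v₀ with hε'def
    have card_pos : 0 < (Fintype.card I : ℝ) := by exact_mod_cast Fintype.card_pos
    refine ⟨ε' / Fintype.card I, div_pos hε' card_pos, fun v => ?_⟩
    by_cases hv : v = 0
    · simp [hv, dotProduct]
    · have hnv : (0:ℝ) < ‖v‖ := norm_pos_iff.mpr hv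
      set u : I → ℝ := ‖v‖⁻¹ • v with hu
      have hunorm : ‖u‖ = 1 := by
        rw [hu, norm_smul]; simp [abs_of_nonneg (le_of_lt hnv), inv_mul_cancel₀ (ne_of_gt hnv)]
      have humem : u ∈ Metric.sphere (0 : I → ℝ) 1 := by simp [dist_zero_right, hunorm]
      have hfu : ε' ≤ f u := hv₀min humem
      have hveq : v = ‖v‖ • u := by
        rw [hu, smul_smul, mul_inv_cancel₀ (ne_of_gt hnv), one_smul]
      have hfv : f v = ‖v‖^2 * f u := by
        rw [hfdef]; simp only
        conv_lhs => rw [hveq]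
        rw [Matrix.mulVec_smul, smul_dotProduct, dotProduct_smul]
        simp [smul_eq_mul]; ring
      have hdot : v ⬝ᵥ v ≤ Fintype.card I * ‖v‖^2 := by
        have hb : ∀ i, v i * v i ≤ ‖v‖^2 := by
          intro i
          have h1 : |v i| ≤ ‖v‖ := by simpa using norm_le_pi_norm v i
          calc v i * v i = |v i|^2 := by rw [sq_abs]; ring
          _ ≤ ‖v‖^2 := by apply pow_le_pow_left₀ (abs_nonneg _) h1
        calc v ⬝ᵥ v = ∑ i, v i * v i := rfl
        _ ≤ ∑ _i : I, ‖v‖^2 := Finset.sum_le_sum fun i _ => hb i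
        _ = Fintype.card I * ‖v‖^2 := by rw [Finset.sum_const, Finset.card_univ]; ring
      calc ε' / Fintype.card I * (v ⬝ᵥ v) ≤ ε' / Fintype.card I * (Fintype.card I * ‖v‖^2) := by
            apply mul_le_mul_of_nonneg_left hdot (le_of_lt (div_pos hε' card_pos))
        _ = ε' * ‖v‖^2 := by
            have hc : (Fintype.card I : ℝ) ≠ 0 := ne_of_gt card_pos
            field_simp
        _ ≤ f u * ‖v‖^2 := by nlinarith [sq_nonneg ‖v‖]
        _ = f v := by rw [hfv]; ring
  · haveI := not_nonempty_iff.mp hI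
    refine ⟨1, one_pos, fun v => ?_⟩
    have h1 : v ⬝ᵥ v = 0 := by simp [dotProduct, Finset.univ_eq_empty]
    have h2 : v ⬝ᵥ M *ᵥ v = 0 := by simp [dotProduct, Finset.univ_eq_empty]
    simp [h1, h2]

lemma dot_transpose_mulVec {m' n' : Type*} [Fintype m'] [Fintype n'] (M : Matrix m' n' ℝ)
    (x : n' → ℝ) (y : m' → ℝ) : x ⬝ᵥ (Mᵀ *ᵥ y) = (M *ᵥ x) ⬝ᵥ y := by
  rw [Matrix.dotProduct_mulVec, Matrix.vecMul_transpose]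

lemma quad_fromBlocks {n₁ m₁ n₂ m₂ : Type*} [Fintype n₁] [Fintype m₁] [Fintype n₂] [Fintype m₂]
    (A : Matrix n₁ n₂ ℝ) (B : Matrix n₁ m₂ ℝ) (C : Matrix m₁ n₂ ℝ) (D : Matrix m₁ m₂ ℝ)
    (x : n₁ → ℝ) (y : m₁ → ℝ) (x' : n₂ → ℝ) (y' : m₂ → ℝ) :
    Sum.elim x y ⬝ᵥ (Matrix.fromBlocks A B C D *ᵥ Sum.elim x' y')
      = x ⬝ᵥ (A *ᵥ x') + x ⬝ᵥ (B *ᵥ y') + y ⬝ᵥ (C *ᵥ x') + y ⬝ᵥ (D *ᵥ y') := by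
  rw [Matrix.fromBlocks_mulVec]
  simp only [Sum.elim_comp_inl, Sum.elim_comp_inr]
  rw [show (A *ᵥ x' + B *ᵥ y') ⊕ᵥ (C *ᵥ x' + D *ᵥ y')
      = Sum.elim (A *ᵥ x' + B *ᵥ y') (C *ᵥ x' + D *ᵥ y') from rfl]
  rw [sumElim_dotProduct_sumElim, dotProduct_add, dotProduct_add]
  ring

/-- ℓ2-performance analysis for a constrained switched linear system
over the label set L = {0,1}, whose switching is constrained by a graph. -/
theorem stmt0
    (n q p nV : ℕ)
    (A : Fin 2 → Matrix (Fin n) (Fin n) ℝ)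
    (B : Fin 2 → Matrix (Fin n) (Fin q) ℝ)
    (C : Fin 2 → Matrix (Fin p) (Fin n) ℝ)
    (D : Fin 2 → Matrix (Fin p) (Fin q) ℝ)
    (E : Set (Fin nV × Fin nV × Fin 2))
    (hout : ∀ i : Fin nV, ∃ j l, (i, j, l) ∈ E)
    (hin : ∀ j : Fin nV, ∃ i l, (i, j, l) ∈ E)
    (γ : ℝ) (hγ : 0 < γ)
    (S G : Fin nV → Matrix (Fin n) (Fin n) ℝ)
    (hSsymm : ∀ i, (S i).IsSymm)
    (hLMI : ∀ i j l, (i, j, l) ∈ E →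
      (Matrix.fromBlocks
        (Matrix.fromBlocks (G i + (G i)ᵀ - S i) 0 0 (γ • (1 : Matrix (Fin q) (Fin q) ℝ)))
        (Matrix.fromBlocks (A l * G i)ᵀ (C l * G i)ᵀ (B l)ᵀ (D l)ᵀ)
        (Matrix.fromBlocks (A l * G i) (B l) (C l * G i) (D l))
        (Matrix.fromBlocks (S j) 0 0 (γ • (1 : Matrix (Fin p) (Fin p) ℝ)))).PosDef) :
    ∀ σ : ℕ → Fin 2,
      (∃ v : ℕ → Fin nV, ∀ k, (v k, v (k + 1), σ k) ∈ E) →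
      -- (i) internal (asymptotic) stability for zero performance input
      ((∀ x : ℕ → Fin n → ℝ,
          (∀ k, x (k + 1) = (A (σ k)).mulVec (x k)) →
          Tendsto x atTop (nhds 0)) ∧
      -- (ii) ℓ2-gain bound for zero initial state
       (∀ (x : ℕ → Fin n → ℝ) (w : ℕ → Fin q → ℝ) (z : ℕ → Fin p → ℝ),
          x 0 = 0 →
          (∀ k, x (k + 1) = (A (σ k)).mulVec (x k) + (B (σ k)).mulVec (w k)) →
          (∀ k, z k = (C (σ k)).mulVec (x k) + (D (σ k)).mulVec (w k)) →
          0 < ∑' k, ENNReal.ofReal (∑ i, (w k i) ^ 2) →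
          (∑' k, ENNReal.ofReal (∑ i, (w k i) ^ 2)) < ⊤ →
          (∑' k, ENNReal.ofReal (∑ i, (z k i) ^ 2)) <
            ENNReal.ofReal γ ^ 2 * ∑' k, ENNReal.ofReal (∑ i, (w k i) ^ 2))) := by
  classical
  intro σ hadm
  obtain ⟨v, hv⟩ := hadm
  haveI : Nonempty (Fin nV) := ⟨v 0⟩
  -- the big LMI matrix
  let BigM : Fin nV → Fin nV → Fin 2 →
      Matrix ((Fin n ⊕ Fin q) ⊕ (Fin n ⊕ Fin p)) ((Fin n ⊕ Fin q) ⊕ (Fin n ⊕ Fin p)) ℝ :=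
    fun i j l => Matrix.fromBlocks
        (Matrix.fromBlocks (G i + (G i)ᵀ - S i) 0 0 (γ • (1 : Matrix (Fin q) (Fin q) ℝ)))
        (Matrix.fromBlocks (A l * G i)ᵀ (C l * G i)ᵀ (B l)ᵀ (D l)ᵀ)
        (Matrix.fromBlocks (A l * G i) (B l) (C l * G i) (D l))
        (Matrix.fromBlocks (S j) 0 0 (γ • (1 : Matrix (Fin p) (Fin p) ℝ)))
  have hBigMpd : ∀ (i j : Fin nV) (l : Fin 2), (i, j, l) ∈ E → (BigM i j l).PosDef := hLMI
  -- quadratic form expansion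
  have hquad : ∀ (i j : Fin nV) (l : Fin 2) (a : Fin n → ℝ) (b : Fin q → ℝ)
      (c : Fin n → ℝ) (d : Fin p → ℝ),
      (Sum.elim (Sum.elim a b) (Sum.elim c d)) ⬝ᵥ
        (BigM i j l *ᵥ Sum.elim (Sum.elim a b) (Sum.elim c d))
      = a ⬝ᵥ ((G i + (G i)ᵀ - S i) *ᵥ a) + γ * (b ⬝ᵥ b)
        + (A l *ᵥ (G i *ᵥ a) + B l *ᵥ b) ⬝ᵥ c + c ⬝ᵥ (A l *ᵥ (G i *ᵥ a) + B l *ᵥ b)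
        + (C l *ᵥ (G i *ᵥ a) + D l *ᵥ b) ⬝ᵥ d + d ⬝ᵥ (C l *ᵥ (G i *ᵥ a) + D l *ᵥ b)
        + c ⬝ᵥ (S j *ᵥ c) + γ * (d ⬝ᵥ d) := by
    intro i j l a b c d
    show (Sum.elim (Sum.elim a b) (Sum.elim c d)) ⬝ᵥ
        ((Matrix.fromBlocks
          (Matrix.fromBlocks (G i + (G i)ᵀ - S i) 0 0 (γ • (1 : Matrix (Fin q) (Fin q) ℝ)))
          (Matrix.fromBlocks (A l * G i)ᵀ (C l * G i)ᵀ (B l)ᵀ (D l)ᵀ)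
          (Matrix.fromBlocks (A l * G i) (B l) (C l * G i) (D l))
          (Matrix.fromBlocks (S j) 0 0 (γ • (1 : Matrix (Fin p) (Fin p) ℝ)))) *ᵥ
          Sum.elim (Sum.elim a b) (Sum.elim c d)) = _
    rw [quad_fromBlocks, quad_fromBlocks, quad_fromBlocks, quad_fromBlocks, quad_fromBlocks]
    rw [dot_transpose_mulVec, dot_transpose_mulVec, dot_transpose_mulVec, dot_transpose_mulVec]
    simp only [Matrix.zero_mulVec, dotProduct_zero, Matrix.smul_mulVec,
      Matrix.one_mulVec, dotProduct_smul, smul_eq_mul, Matrix.mulVec_mulVec,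
      add_dotProduct, dotProduct_add]
    ring
  -- positivity of the S matrices
  have hSpd : ∀ j : Fin nV, (S j).PosDef := by
    intro j
    refine Matrix.PosDef.of_dotProduct_mulVec_pos ?_ (fun u hu => ?_)
    · rw [Matrix.IsHermitian, Matrix.conjTranspose_eq_transpose_of_trivial]
      exact hSsymm j
    · obtain ⟨i, l, he⟩ := hin j
      have hne : (Sum.elim (Sum.elim (0 : Fin n → ℝ) (0 : Fin q → ℝ))
          (Sum.elim u (0 : Fin p → ℝ))) ≠ 0 := by
        intro h0
        apply hu
        funext t
        have := congrFun h0 (Sum.inr (Sum.inl t))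
        simpa using this
      have hpos : 0 < (Sum.elim (Sum.elim (0 : Fin n → ℝ) (0 : Fin q → ℝ))
          (Sum.elim u (0 : Fin p → ℝ))) ⬝ᵥ (BigM i j l *ᵥ
          (Sum.elim (Sum.elim (0 : Fin n → ℝ) (0 : Fin q → ℝ)) (Sum.elim u (0 : Fin p → ℝ)))) := by
        have h0 := (hBigMpd i j l he).dotProduct_mulVec_pos hne
        simpa using h0
      have hq := hquad i j l 0 0 u 0
      simp only [Matrix.mulVec_zero, dotProduct_zero, zero_dotProduct,
        add_zero, zero_add, mul_zero] at hq
      rw [hq] at hpos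
      simpa using hpos
  have hTLpos : ∀ (i : Fin nV) (u : Fin n → ℝ), u ≠ 0 →
      0 < u ⬝ᵥ ((G i + (G i)ᵀ - S i) *ᵥ u) := by
    intro i u hu
    obtain ⟨j, l, he⟩ := hout i
    have hne : (Sum.elim (Sum.elim u (0 : Fin q → ℝ))
        (Sum.elim (0 : Fin n → ℝ) (0 : Fin p → ℝ))) ≠ 0 := by
      intro h0
      apply hu
      funext t
      have := congrFun h0 (Sum.inl (Sum.inl t))
      simpa using this
    have hpos : 0 < (Sum.elim (Sum.elim u (0 : Fin q → ℝ))
        (Sum.elim (0 : Fin n → ℝ) (0 : Fin p → ℝ))) ⬝ᵥ (BigM i j l *ᵥ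
        (Sum.elim (Sum.elim u (0 : Fin q → ℝ)) (Sum.elim (0 : Fin n → ℝ) (0 : Fin p → ℝ)))) := by
      have h0 := (hBigMpd i j l he).dotProduct_mulVec_pos hne
      simpa using h0
    have hq := hquad i j l u 0 0 0
    simp only [Matrix.mulVec_zero, dotProduct_zero, zero_dotProduct,
      add_zero, zero_add, mul_zero] at hq
    rw [hq] at hpos
    simpa using hpos
  have hGdet : ∀ i : Fin nV, IsUnit (G i).det := by
    intro i
    by_contra hdet
    rw [isUnit_iff_ne_zero, ne_eq, not_not] at hdet
    obtain ⟨u, hu, hGu⟩ := (Matrix.exists_mulVec_eq_zero_iff).mpr hdet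
    have h1 := hTLpos i u hu
    have h2 : u ⬝ᵥ ((G i + (G i)ᵀ - S i) *ᵥ u) = - (u ⬝ᵥ (S i *ᵥ u)) := by
      rw [Matrix.sub_mulVec, Matrix.add_mulVec, dotProduct_sub, dotProduct_add,
        hGu, dot_transpose_mulVec, hGu]
      simp
    have h3 : 0 < u ⬝ᵥ (S i *ᵥ u) := by simpa using (hSpd i).dotProduct_mulVec_pos hu
    rw [h2] at h1
    linarith
  set P : Fin nV → Matrix (Fin n) (Fin n) ℝ := fun i => (S i)⁻¹ with hP
  have hPpd : ∀ i, (P i).PosDef := fun i => (hSpd i).inv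
  have hSP : ∀ i, S i * P i = 1 := fun i =>
    Matrix.mul_nonsing_inv _ (isUnit_iff_ne_zero.mpr (ne_of_gt (hSpd i).det_pos))
  have hPS : ∀ i, P i * S i = 1 := fun i =>
    Matrix.nonsing_inv_mul _ (isUnit_iff_ne_zero.mpr (ne_of_gt (hSpd i).det_pos))
  have hPsymm : ∀ i, (P i)ᵀ = P i := by
    intro i
    rw [hP]
    simp only
    rw [Matrix.transpose_nonsing_inv, (hSsymm i)]
  -- uniform margin
  have hmar : ∀ t : Fin nV × Fin nV × Fin 2, ∃ e : ℝ, 0 < e ∧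
      ((t.1, t.2.1, t.2.2) ∈ E → ∀ u : (Fin n ⊕ Fin q) ⊕ (Fin n ⊕ Fin p) → ℝ,
        e * (u ⬝ᵥ u) ≤ u ⬝ᵥ (BigM t.1 t.2.1 t.2.2 *ᵥ u)) := by
    intro t
    by_cases ht : (t.1, t.2.1, t.2.2) ∈ E
    · obtain ⟨e, he, hemar⟩ := posdef_margin (hBigMpd t.1 t.2.1 t.2.2 ht)
      exact ⟨e, he, fun _ => hemar⟩
    · exact ⟨1, one_pos, fun h => absurd h ht⟩
  choose εf hεf1 hεf2 using hmar
  set ε : ℝ := min (Finset.univ.inf' Finset.univ_nonempty εf) (γ / 2) with hε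
  have hεpos : 0 < ε := by
    rw [hε]
    apply lt_min _ (by linarith)
    rw [Finset.lt_inf'_iff]
    exact fun t _ => hεf1 t
  have hεltγ : ε < γ := lt_of_le_of_lt (min_le_right _ _) (by linarith)
  have hεle : ∀ t : Fin nV × Fin nV × Fin 2, ε ≤ εf t := fun t =>
    le_trans (min_le_left _ _) (Finset.inf'_le _ (Finset.mem_univ t))
  -- the key dissipation inequality
  have key : ∀ (i j : Fin nV) (l : Fin 2), (i, j, l) ∈ E →
      ∀ (a : Fin n → ℝ) (w : Fin q → ℝ),
      (A l *ᵥ (G i *ᵥ a) + B l *ᵥ w) ⬝ᵥ (P j *ᵥ (A l *ᵥ (G i *ᵥ a) + B l *ᵥ w))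
        + γ⁻¹ * ((C l *ᵥ (G i *ᵥ a) + D l *ᵥ w) ⬝ᵥ (C l *ᵥ (G i *ᵥ a) + D l *ᵥ w))
        + ε * (a ⬝ᵥ a) + ε * (w ⬝ᵥ w)
      ≤ (G i *ᵥ a) ⬝ᵥ (P i *ᵥ (G i *ᵥ a)) + γ * (w ⬝ᵥ w) := by
    intro i j l he a w
    set ξ : Fin n → ℝ := G i *ᵥ a with hξ
    set x' : Fin n → ℝ := A l *ᵥ ξ + B l *ᵥ w with hx'
    set z' : Fin p → ℝ := C l *ᵥ ξ + D l *ᵥ w with hz'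
    set c : Fin n → ℝ := -(P j *ᵥ x') with hc
    set d : Fin p → ℝ := -(γ⁻¹ • z') with hd
    have hq := hquad i j l a w c d
    rw [← hξ, ← hx', ← hz'] at hq
    have hmarg := hεf2 (i, j, l) he (Sum.elim (Sum.elim a w) (Sum.elim c d))
    have hvv : (Sum.elim (Sum.elim a w) (Sum.elim c d)) ⬝ᵥ
        (Sum.elim (Sum.elim a w) (Sum.elim c d))
        = a ⬝ᵥ a + w ⬝ᵥ w + (c ⬝ᵥ c + d ⬝ᵥ d) := by
      rw [sumElim_dotProduct_sumElim, sumElim_dotProduct_sumElim,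
        sumElim_dotProduct_sumElim]
    have h1 : x' ⬝ᵥ c = -(x' ⬝ᵥ (P j *ᵥ x')) := by rw [hc, dotProduct_neg]
    have h2 : c ⬝ᵥ x' = -(x' ⬝ᵥ (P j *ᵥ x')) := by rw [dotProduct_comm]; exact h1
    have h3 : c ⬝ᵥ (S j *ᵥ c) = x' ⬝ᵥ (P j *ᵥ x') := by
      rw [hc, neg_dotProduct, Matrix.mulVec_neg, dotProduct_neg, neg_neg,
        Matrix.mulVec_mulVec, hSP j, Matrix.one_mulVec, dotProduct_comm]
    have h4 : z' ⬝ᵥ d = -(γ⁻¹ * (z' ⬝ᵥ z')) := by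
      rw [hd, dotProduct_neg, dotProduct_smul]; simp [smul_eq_mul]
    have h5 : d ⬝ᵥ z' = -(γ⁻¹ * (z' ⬝ᵥ z')) := by rw [dotProduct_comm]; exact h4
    have h6 : γ * (d ⬝ᵥ d) = γ⁻¹ * (z' ⬝ᵥ z') := by
      rw [hd, neg_dotProduct, dotProduct_neg, neg_neg, smul_dotProduct,
        dotProduct_smul]
      simp only [smul_eq_mul]
      field_simp
    have h7 : a ⬝ᵥ ((G i + (G i)ᵀ - S i) *ᵥ a) ≤ ξ ⬝ᵥ (P i *ᵥ ξ) := by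
      set y : Fin n → ℝ := ξ - S i *ᵥ a with hy
      have hynn : 0 ≤ y ⬝ᵥ (P i *ᵥ y) := by simpa using (hPpd i).posSemidef.dotProduct_mulVec_nonneg y
      have hPSa : P i *ᵥ (S i *ᵥ a) = a := by
        rw [Matrix.mulVec_mulVec, hPS i, Matrix.one_mulVec]
      have hvP : (S i *ᵥ a) ᵥ* P i = a := by
        rw [← hPsymm i, Matrix.vecMul_transpose, hPSa]
      have hSaPξ : (S i *ᵥ a) ⬝ᵥ (P i *ᵥ ξ) = a ⬝ᵥ ξ := by
        rw [Matrix.dotProduct_mulVec, hvP]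
      have hSaPSa : (S i *ᵥ a) ⬝ᵥ (P i *ᵥ (S i *ᵥ a)) = a ⬝ᵥ (S i *ᵥ a) := by
        rw [hPSa, dotProduct_comm]
      have hξPSa : ξ ⬝ᵥ (P i *ᵥ (S i *ᵥ a)) = a ⬝ᵥ ξ := by
        rw [hPSa, dotProduct_comm]
      have hyexp : y ⬝ᵥ (P i *ᵥ y)
          = ξ ⬝ᵥ (P i *ᵥ ξ) - a ⬝ᵥ ξ - a ⬝ᵥ ξ + a ⬝ᵥ (S i *ᵥ a) := by
        rw [hy, Matrix.mulVec_sub, sub_dotProduct, dotProduct_sub,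
          dotProduct_sub, hξPSa, hSaPξ, hSaPSa]
        ring
      have hthe : a ⬝ᵥ ((G i + (G i)ᵀ - S i) *ᵥ a)
          = a ⬝ᵥ ξ + a ⬝ᵥ ξ - a ⬝ᵥ (S i *ᵥ a) := by
        rw [Matrix.sub_mulVec, Matrix.add_mulVec, dotProduct_sub, dotProduct_add]
        have hGt : a ⬝ᵥ ((G i)ᵀ *ᵥ a) = a ⬝ᵥ ξ := by
          rw [dot_transpose_mulVec, ← hξ, dotProduct_comm]
        have hG : a ⬝ᵥ (G i *ᵥ a) = a ⬝ᵥ ξ := by rw [← hξ]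
        rw [hGt, hG]
      linarith
    have hcnn : 0 ≤ c ⬝ᵥ c := dotProduct_self_nonneg' c
    have hdnn : 0 ≤ d ⬝ᵥ d := dotProduct_self_nonneg' d
    have hann : 0 ≤ a ⬝ᵥ a := dotProduct_self_nonneg' a
    have hwnn : 0 ≤ w ⬝ᵥ w := dotProduct_self_nonneg' w
    have hεf' := hεle (i, j, l)
    have hεfpos := hεf1 (i, j, l)
    have hle1 : ε * (a ⬝ᵥ a) + ε * (w ⬝ᵥ w)
        ≤ εf (i, j, l) * (a ⬝ᵥ a + w ⬝ᵥ w + (c ⬝ᵥ c + d ⬝ᵥ d)) := by nlinarith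
    have hmarg' : εf (i, j, l) * ((Sum.elim (Sum.elim a w) (Sum.elim c d)) ⬝ᵥ
        (Sum.elim (Sum.elim a w) (Sum.elim c d)))
        ≤ (Sum.elim (Sum.elim a w) (Sum.elim c d)) ⬝ᵥ
          (BigM i j l *ᵥ (Sum.elim (Sum.elim a w) (Sum.elim c d))) := hmarg
    rw [hvv, hq, h1, h2, h4, h5, h3, h6] at hmarg'
    linarith
  have hGmul : ∀ (i : Fin nV) (u : Fin n → ℝ), G i *ᵥ ((G i)⁻¹ *ᵥ u) = u := by
    intro i u
    rw [Matrix.mulVec_mulVec, Matrix.mul_nonsing_inv _ (hGdet i), Matrix.one_mulVec]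
  have hPnn : ∀ (i : Fin nV) (u : Fin n → ℝ), 0 ≤ u ⬝ᵥ (P i *ᵥ u) := by
    intro i u; simpa using (hPpd i).posSemidef.dotProduct_mulVec_nonneg u
  constructor
  · -- part (i): internal stability
    intro x hx
    set a : ℕ → Fin n → ℝ := fun k => (G (v k))⁻¹ *ᵥ x k with ha
    have hGa : ∀ k, G (v k) *ᵥ a k = x k := fun k => hGmul _ _
    have hstep : ∀ k, x (k+1) ⬝ᵥ (P (v (k+1)) *ᵥ x (k+1)) + ε * (a k ⬝ᵥ a k)
        ≤ x k ⬝ᵥ (P (v k) *ᵥ x k) := by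
      intro k
      have hk := key (v k) (v (k+1)) (σ k) (hv k) (a k) 0
      rw [hGa k] at hk
      have hx1 : A (σ k) *ᵥ x k + B (σ k) *ᵥ (0 : Fin q → ℝ) = x (k+1) := by
        rw [Matrix.mulVec_zero, add_zero, ← hx k]
      rw [hx1] at hk
      have hznn : 0 ≤ γ⁻¹ * ((C (σ k) *ᵥ x k + D (σ k) *ᵥ (0 : Fin q → ℝ)) ⬝ᵥ
          (C (σ k) *ᵥ x k + D (σ k) *ᵥ (0 : Fin q → ℝ))) :=
        mul_nonneg (inv_nonneg.mpr hγ.le) (dotProduct_self_nonneg' _)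
      simp only [dotProduct_zero, mul_zero, add_zero] at hk
      linarith
    have hsum : ∀ N, ε * (∑ k ∈ Finset.range N, a k ⬝ᵥ a k) + x N ⬝ᵥ (P (v N) *ᵥ x N)
        ≤ x 0 ⬝ᵥ (P (v 0) *ᵥ x 0) := by
      intro N
      induction N with
      | zero => simp
      | succ N ih =>
        rw [Finset.sum_range_succ, mul_add]
        have := hstep N
        linarith
    have hbdd : ∀ N, ∑ k ∈ Finset.range N, (a k ⬝ᵥ a k)
        ≤ (x 0 ⬝ᵥ (P (v 0) *ᵥ x 0)) / ε := by
      intro N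
      have h0 := hsum N
      have h1 := hPnn (v N) (x N)
      rw [le_div_iff₀ hεpos]
      nlinarith
    have hsummable : Summable (fun k => a k ⬝ᵥ a k) :=
      summable_of_sum_range_le (fun k => dotProduct_self_nonneg' _) hbdd
    have htends : Tendsto (fun k => a k ⬝ᵥ a k) atTop (nhds 0) :=
      hsummable.tendsto_atTop_zero
    have habs : ∀ jx : Fin n, Tendsto (fun k => |a k jx|) atTop (nhds 0) := by
      intro jx
      have hsq : Tendsto (fun k => Real.sqrt (a k ⬝ᵥ a k)) atTop (nhds 0) := by
        have h0 := (Real.continuous_sqrt.tendsto 0).comp htends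
        simpa using (show Tendsto (fun k => Real.sqrt (a k ⬝ᵥ a k)) atTop (nhds (Real.sqrt 0)) from h0)
      apply squeeze_zero (fun k => abs_nonneg _) _ hsq
      intro k
      rw [← Real.sqrt_sq_eq_abs]
      apply Real.sqrt_le_sqrt
      rw [sq]
      exact Finset.single_le_sum (f := fun t => a k t * a k t)
        (fun t _ => mul_self_nonneg _) (Finset.mem_univ jx)
    rw [tendsto_pi_nhds]
    intro m
    have hxm : ∀ k, x k m = ∑ jx, G (v k) m jx * a k jx := by
      intro k; rw [← hGa k]; rfl
    set K : ℝ := ∑ t : Fin nV, ∑ m' : Fin n, ∑ j' : Fin n, |G t m' j'| with hK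
    have hKb : ∀ (t : Fin nV) (j' : Fin n), |G t m j'| ≤ K := by
      intro t j'
      calc |G t m j'| ≤ ∑ j'', |G t m j''| :=
            Finset.single_le_sum (f := fun j'' => |G t m j''|)
              (fun _ _ => abs_nonneg _) (Finset.mem_univ j')
        _ ≤ ∑ m', ∑ j'', |G t m' j''| :=
            Finset.single_le_sum (f := fun m' => ∑ j'', |G t m' j''|)
              (fun _ _ => Finset.sum_nonneg fun _ _ => abs_nonneg _) (Finset.mem_univ m)
        _ ≤ K :=
            Finset.single_le_sum (f := fun t => ∑ m', ∑ j'', |G t m' j''|)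
              (fun _ _ => Finset.sum_nonneg fun _ _ => Finset.sum_nonneg fun _ _ => abs_nonneg _)
              (Finset.mem_univ t)
    have hgb : Tendsto (fun k => ∑ jx, K * |a k jx|) atTop (nhds 0) := by
      have h0 := tendsto_finset_sum (Finset.univ : Finset (Fin n))
        (fun jx _ => (habs jx).const_mul K)
      simpa using h0
    have habsx : Tendsto (fun k => |x k m|) atTop (nhds 0) := by
      apply squeeze_zero (fun k => abs_nonneg _) _ hgb
      intro k
      rw [hxm k]
      calc |∑ jx, G (v k) m jx * a k jx| ≤ ∑ jx, |G (v k) m jx * a k jx| :=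
            Finset.abs_sum_le_sum_abs _ _
        _ ≤ ∑ jx, K * |a k jx| := Finset.sum_le_sum fun jx _ => by
            rw [abs_mul]
            exact mul_le_mul_of_nonneg_right (hKb _ _) (abs_nonneg _)
    have hneg := habsx.neg
    rw [neg_zero] at hneg
    have hfin : Tendsto (fun k => x k m) atTop (nhds 0) :=
      tendsto_of_tendsto_of_tendsto_of_le_of_le hneg habsx
        (fun k => neg_abs_le _) (fun k => le_abs_self _)
    simpa using hfin
  · -- part (ii): ℓ2-gain
    intro x w z hx0 hrec hz hpos htop
    set a : ℕ → Fin n → ℝ := fun k => (G (v k))⁻¹ *ᵥ x k with ha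
    have hGa : ∀ k, G (v k) *ᵥ a k = x k := fun k => hGmul _ _
    set W : ℕ → ℝ := fun k => w k ⬝ᵥ w k with hW
    set Z : ℕ → ℝ := fun k => z k ⬝ᵥ z k with hZ
    have hWk : ∀ k, (∑ i, (w k i)^2) = W k := by
      intro k
      rw [hW]
      simp only [dotProduct, pow_two]
    have hZk : ∀ k, (∑ i, (z k i)^2) = Z k := by
      intro k
      rw [hZ]
      simp only [dotProduct, pow_two]
    simp only [hWk, hZk] at hpos htop ⊢
    have hWnn : ∀ k, 0 ≤ W k := fun k => dotProduct_self_nonneg' _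
    have hZnn : ∀ k, 0 ≤ Z k := fun k => dotProduct_self_nonneg' _
    have hsumW : Summable W := by
      have h1 : (∑' k, (((W k).toNNReal : NNReal) : ENNReal)) ≠ ⊤ := by
        have e : (∑' k, (((W k).toNNReal : NNReal) : ENNReal))
            = ∑' k, ENNReal.ofReal (W k) := tsum_congr fun k => rfl
        rw [e]
        exact ne_of_lt htop
      have h2 := ENNReal.tsum_coe_ne_top_iff_summable.mp h1
      have h3 := NNReal.summable_coe.mpr h2
      have e2 : (fun k => (((W k).toNNReal : NNReal) : ℝ)) = W :=
        funext fun k => Real.coe_toNNReal _ (hWnn k)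
      rwa [e2] at h3
    set SW : ℝ := ∑' k, W k with hSW
    have hSWofReal : (∑' k, ENNReal.ofReal (W k)) = ENNReal.ofReal SW :=
      (ENNReal.ofReal_tsum_of_nonneg hWnn hsumW).symm
    have hSWpos : 0 < SW := by
      rw [hSWofReal] at hpos
      exact ENNReal.ofReal_pos.mp hpos
    have hstep : ∀ k, x (k+1) ⬝ᵥ (P (v (k+1)) *ᵥ x (k+1)) + γ⁻¹ * Z k + ε * W k
        ≤ x k ⬝ᵥ (P (v k) *ᵥ x k) + γ * W k := by
      intro k
      have hk := key (v k) (v (k+1)) (σ k) (hv k) (a k) (w k)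
      rw [hGa k] at hk
      rw [← hrec k] at hk
      rw [← hz k] at hk
      have hann : 0 ≤ ε * (a k ⬝ᵥ a k) := mul_nonneg hεpos.le (dotProduct_self_nonneg' _)
      simp only [hZ, hW]
      linarith
    have hVf0 : x 0 ⬝ᵥ (P (v 0) *ᵥ x 0) = 0 := by rw [hx0]; simp
    have htel : ∀ N, (∑ k ∈ Finset.range N, (γ⁻¹ * Z k + ε * W k))
        + x N ⬝ᵥ (P (v N) *ᵥ x N) ≤ ∑ k ∈ Finset.range N, γ * W k := by
      intro N
      induction N with
      | zero => simp [hVf0]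
      | succ N ih =>
        rw [Finset.sum_range_succ, Finset.sum_range_succ]
        have := hstep N
        linarith
    have hZbound : ∀ N, ∑ k ∈ Finset.range N, Z k ≤ γ * (γ - ε) * SW := by
      intro N
      have h0 := htel N
      have h1 := hPnn (v N) (x N)
      have h2 : ∑ k ∈ Finset.range N, W k ≤ SW :=
        Summable.sum_le_tsum _ (fun k _ => hWnn k) hsumW
      have e1 : (∑ k ∈ Finset.range N, (γ⁻¹ * Z k + ε * W k))
          = γ⁻¹ * (∑ k ∈ Finset.range N, Z k) + ε * (∑ k ∈ Finset.range N, W k) := by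
        rw [Finset.sum_add_distrib, Finset.mul_sum, Finset.mul_sum]
      have e2 : (∑ k ∈ Finset.range N, γ * W k) = γ * (∑ k ∈ Finset.range N, W k) := by
        rw [Finset.mul_sum]
      rw [e1, e2] at h0
      have h4 : γ⁻¹ * (∑ k ∈ Finset.range N, Z k)
          ≤ (γ - ε) * (∑ k ∈ Finset.range N, W k) := by nlinarith
      have h5 : (γ - ε) * (∑ k ∈ Finset.range N, W k) ≤ (γ - ε) * SW :=
        mul_le_mul_of_nonneg_left h2 (by linarith)
      have h6 : γ⁻¹ * (∑ k ∈ Finset.range N, Z k) ≤ (γ - ε) * SW := le_trans h4 h5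
      calc ∑ k ∈ Finset.range N, Z k
          = γ * (γ⁻¹ * (∑ k ∈ Finset.range N, Z k)) := by field_simp
        _ ≤ γ * ((γ - ε) * SW) := mul_le_mul_of_nonneg_left h6 hγ.le
        _ = γ * (γ - ε) * SW := by ring
    have hsumZ : Summable Z := summable_of_sum_range_le hZnn hZbound
    have htsumZ : (∑' k, Z k) ≤ γ * (γ - ε) * SW := hsumZ.tsum_le_of_sum_range_le hZbound
    have hZofReal : (∑' k, ENNReal.ofReal (Z k)) = ENNReal.ofReal (∑' k, Z k) :=
      (ENNReal.ofReal_tsum_of_nonneg hZnn hsumZ).symm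
    rw [hZofReal, hSWofReal, ← ENNReal.ofReal_pow hγ.le,
      ← ENNReal.ofReal_mul (by positivity)]
    rw [ENNReal.ofReal_lt_ofReal_iff (mul_pos (pow_pos hγ 2) hSWpos)]
    nlinarith [mul_pos (mul_pos hγ hεpos) hSWpos]
end

section
/- Let s ∈ ℕ, s ≥ 1, and L = {0,1,…,s−1}. Consider the lifted constrained switched linear system with, for each label l ∈ L, matrices Ã_l ∈ ℝ^{n×n}, B̃^w_l ∈ ℝ^{n×(l+1)q}, C̃_l ∈ ℝ^{(l+1)p×n}, D̃^w_l ∈ ℝ^{(l+1)p×(l+1)q}, and dynamics x̃_{k+1} = Ã_{σ_k} x̃_k + B̃^w_{σ_k} w̃_k, z̃_k = C̃_{σ_k} x̃_k + D̃^w_{σ_k} w̃_k, where w̃_k ∈ ℝ^{(σ_k+1)q} and z̃_k ∈ ℝ^{(σ_k+1)p}, and let G̃ = (V,E) be a switching graph over L. Suppose γ > 0 and there exist symmetric matrices S_i ∈ ℝ^{n×n} and matrices G_i ∈ ℝ^{n×n} for each node i ∈ V such that for every edge (i,j,l) ∈ E the block matrix [[G_i + G_iᵀ − S_i, 0, (Ã_l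 G_i)ᵀ, (C̃_l G_i)ᵀ], [0, γ I_{(l+1)q}, (B̃^w_l)ᵀ, (D̃^w_l)ᵀ], [Ã_l G_i, B̃^w_l, S_j, 0], [C̃_l G_i, D̃^w_l, 0, γ I_{(l+1)p}]] is positive definite. Then the lifted system has ℓ2-performance with gain γ with respect to the set of switching sequences admissible for G̃: (i) for every admissible σ, every x̃_0, and w̃ ≡ 0, x̃_k → 0 as k → ∞, and (ii) for every admissible σ, x̃_0 = 0, and every w̃ with 0 < ∑_{k=0}^∞ ‖w̃_k‖² < ∞, it holds that ∑_{k=0}^∞ ‖z̃_k‖² < γ² ∑_{k=0}^∞ ‖w̃_k‖². -/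
open Matrix Filter Topology

section helpers
variable {α β : Type*} [Fintype α] [Fintype β]

lemma dot_transpose' (M : Matrix β α ℝ) (u : α → ℝ) (v : β → ℝ) :
    u ⬝ᵥ Mᵀ.mulVec v = (M.mulVec u) ⬝ᵥ v := by
  rw [Matrix.dotProduct_mulVec, Matrix.vecMul_transpose]

lemma dot_mulVec_symm {M : Matrix α α ℝ} (hM : Mᵀ = M) (u v : α → ℝ) :
    u ⬝ᵥ M.mulVec v = v ⬝ᵥ M.mulVec u := by
  conv_lhs => rw [← hM]
  rw [dot_transpose', dotProduct_comm]

lemma quad_ub' (Q : Matrix α α ℝ) (x : α → ℝ) :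
    x ⬝ᵥ Q.mulVec x ≤ (∑ i, ∑ j, |Q i j|) * ∑ i, (x i) ^ 2 := by
  have h1 : x ⬝ᵥ Q.mulVec x = ∑ i, ∑ j, x i * Q i j * x j := by
    simp [dotProduct, Matrix.mulVec, Finset.mul_sum, mul_assoc]
  rw [h1, Finset.sum_mul]
  refine Finset.sum_le_sum fun i _ => ?_
  rw [Finset.sum_mul]
  refine Finset.sum_le_sum fun j _ => ?_
  have hsq : ∀ k : α, (x k) ^ 2 ≤ ∑ m, (x m) ^ 2 :=
    fun k => Finset.single_le_sum (fun m _ => sq_nonneg (x m)) (Finset.mem_univ k)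
  have h2 : x i * Q i j * x j ≤ |Q i j| * (((x i)^2 + (x j)^2)/2) := by
    nlinarith [mul_nonneg (by linarith [neg_abs_le (Q i j)] : (0:ℝ) ≤ |Q i j| + Q i j) (sq_nonneg (x i - x j)),
      mul_nonneg (by linarith [le_abs_self (Q i j)] : (0:ℝ) ≤ |Q i j| - Q i j) (sq_nonneg (x i + x j))]
  refine h2.trans ?_
  have h3 : ((x i)^2 + (x j)^2)/2 ≤ ∑ m, (x m) ^ 2 := by
    have := hsq i; have := hsq j; linarith
  exact mul_le_mul_of_nonneg_left h3 (abs_nonneg _)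

lemma dot_self_sum_sq (x : α → ℝ) : x ⬝ᵥ x = ∑ i, (x i) ^ 2 := by
  simp [dotProduct, sq]

lemma sum_sq_pos_of_ne_zero {x : α → ℝ} (hx : x ≠ 0) : 0 < ∑ i, (x i) ^ 2 := by
  obtain ⟨i, hi⟩ : ∃ i, x i ≠ 0 := by
    by_contra h; push_neg at h; exact hx (funext h)
  have := Finset.single_le_sum (f := fun m => (x m)^2) (fun m _ => sq_nonneg (x m)) (Finset.mem_univ i)
  have : 0 < (x i)^2 := by positivity
  calc (0:ℝ) < (x i)^2 := this
    _ ≤ _ := Finset.single_le_sum (f := fun m => (x m)^2) (fun m _ => sq_nonneg (x m)) (Finset.mem_univ i)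

lemma bilin_block {α' β' : Type*} [Fintype α'] [Fintype β']
    (A : Matrix α α' ℝ) (B : Matrix α β' ℝ) (C : Matrix β α' ℝ) (D : Matrix β β' ℝ)
    (x : α → ℝ) (x' : α' → ℝ) (y : β → ℝ) (y' : β' → ℝ) :
    Sum.elim x y ⬝ᵥ (fromBlocks A B C D).mulVec (Sum.elim x' y')
      = x ⬝ᵥ A.mulVec x' + x ⬝ᵥ B.mulVec y' + y ⬝ᵥ C.mulVec x' + y ⬝ᵥ D.mulVec y' := by
  simp only [Matrix.fromBlocks_mulVec, sumElim_dotProduct_sumElim, dotProduct_add,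
    Sum.elim_comp_inl, Sum.elim_comp_inr]
  ring

lemma symm_of_posdef {Q : Matrix α α ℝ} (hQ : Q.PosDef) : Qᵀ = Q := by
  have := hQ.isHermitian.eq
  rwa [Matrix.conjTranspose_eq_transpose_of_trivial] at this

lemma quad_lb [DecidableEq α] {Q : Matrix α α ℝ} (hQ : Q.PosDef) :
    ∃ ε > 0, ∀ x : α → ℝ, ε * ∑ i, (x i) ^ 2 ≤ x ⬝ᵥ Q.mulVec x := by
  set c : ℝ := (∑ i, ∑ j, |(Q⁻¹) i j|) + 1 with hc
  have hcpos : 0 < c := by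
    rw [hc]; positivity
  refine ⟨c⁻¹, by positivity, fun x => ?_⟩
  by_cases hx : x = 0
  · simp [hx]
  have hdet : IsUnit Q.det := hQ.det_pos.ne'.isUnit
  have hinv : (Q⁻¹).PosDef := hQ.inv
  have hQt : Qᵀ = Q := symm_of_posdef hQ
  have hsymm : (Q⁻¹)ᵀ = Q⁻¹ := by
    rw [Matrix.transpose_nonsing_inv, hQt]
  have hd : 0 < x ⬝ᵥ (Q⁻¹).mulVec x := by
    have := hinv.dotProduct_mulVec_pos hx
    simpa using this
  set s : ℝ := ∑ i, (x i) ^ 2 with hs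
  have hspos : 0 < s := sum_sq_pos_of_ne_zero hx
  set d : ℝ := x ⬝ᵥ (Q⁻¹).mulVec x with hdd
  set t : ℝ := s / d with ht
  -- expand (x - t • Q⁻¹x)ᵀ Q (x - t • Q⁻¹x) ≥ 0
  have hkey : 0 ≤ x ⬝ᵥ Q.mulVec x - 2 * t * s + t ^ 2 * d := by
    have h0 := hQ.posSemidef.dotProduct_mulVec_nonneg (x - t • ((Q⁻¹).mulVec x))
    simp only [star_trivial] at h0
    have hexp : (x - t • ((Q⁻¹).mulVec x)) ⬝ᵥ Q.mulVec (x - t • ((Q⁻¹).mulVec x))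
        = x ⬝ᵥ Q.mulVec x - 2 * t * s + t ^ 2 * d := by
      have e1 : Q.mulVec ((Q⁻¹).mulVec x) = x := by
        rw [Matrix.mulVec_mulVec, Matrix.mul_nonsing_inv _ hdet, Matrix.one_mulVec]
      have e2 : x ⬝ᵥ Q.mulVec ((Q⁻¹).mulVec x) = s := by
        rw [e1, dot_self_sum_sq]
      have e3 : ((Q⁻¹).mulVec x) ⬝ᵥ Q.mulVec x = s := by
        rw [dot_mulVec_symm hQt]; exact e2
      have e4 : ((Q⁻¹).mulVec x) ⬝ᵥ Q.mulVec ((Q⁻¹).mulVec x) = d := by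
        rw [e1, dotProduct_comm]
      simp only [Matrix.mulVec_sub, Matrix.mulVec_smul, sub_dotProduct, dotProduct_sub,
        smul_dotProduct, dotProduct_smul, smul_eq_mul]
      rw [e2, e3, e4]
      ring
    rw [hexp] at h0
    exact h0
  -- so xQx ≥ 2ts - t²d = s²/d
  have h5 : s ^ 2 / d ≤ x ⬝ᵥ Q.mulVec x := by
    have : 2 * t * s - t ^ 2 * d = s ^ 2 / d := by
      rw [ht]
      field_simp
      ring
    nlinarith [hkey]
  -- d ≤ c * s
  have h6 : d ≤ c * s := by
    have := quad_ub' (Q⁻¹) x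
    have hle : (∑ i, ∑ j, |(Q⁻¹) i j|) ≤ c := by simp [hc]
    calc d ≤ (∑ i, ∑ j, |(Q⁻¹) i j|) * s := this
      _ ≤ c * s := mul_le_mul_of_nonneg_right hle hspos.le
  have h7 : c⁻¹ * s ≤ s ^ 2 / d := by
    rw [le_div_iff₀ hd]
    have h9 : c⁻¹ * s * d ≤ c⁻¹ * s * (c * s) :=
      mul_le_mul_of_nonneg_left h6 (by positivity)
    have h8 : c⁻¹ * s * (c * s) = s ^ 2 := by
      field_simp
    linarith
  exact h7.trans h5

lemma posdef_block11 {A : Matrix α α ℝ} {B : Matrix α β ℝ} {C : Matrix β α ℝ} {D : Matrix β β ℝ}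
    (h : (fromBlocks A B C D).PosDef) : A.PosDef := by
  refine Matrix.PosDef.of_dotProduct_mulVec_pos (Matrix.isHermitian_fromBlocks_iff.mp h.1).1 fun x hx => ?_
  have hne : Sum.elim x (0 : β → ℝ) ≠ 0 := by
    intro h0
    exact hx (funext fun i => congrFun h0 (Sum.inl i))
  have := h.dotProduct_mulVec_pos hne
  simp only [star_trivial] at this ⊢
  rw [bilin_block A B C D x x (0 : β → ℝ) 0] at this
  simpa using this

lemma posdef_block22 {A : Matrix α α ℝ} {B : Matrix α β ℝ} {C : Matrix β α ℝ} {D : Matrix β β ℝ}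
    (h : (fromBlocks A B C D).PosDef) : D.PosDef := by
  refine Matrix.PosDef.of_dotProduct_mulVec_pos (Matrix.isHermitian_fromBlocks_iff.mp h.1).2.2.2 fun y hy => ?_
  have hne : Sum.elim (0 : α → ℝ) y ≠ 0 := by
    intro h0
    exact hy (funext fun i => congrFun h0 (Sum.inr i))
  have := h.dotProduct_mulVec_pos hne
  simp only [star_trivial] at this ⊢
  rw [bilin_block A B C D (0 : α → ℝ) 0 y y] at this
  simpa using this
end helpers

section dissip
variable {α β δ : Type*} [Fintype α] [Fintype β] [Fintype δ]
  [DecidableEq α] [DecidableEq β] [DecidableEq δ]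

lemma dissipation
    (A : Matrix α α ℝ) (B : Matrix α β ℝ) (C : Matrix δ α ℝ) (D : Matrix δ β ℝ)
    (Si Sj Gi : Matrix α α ℝ) (γ : ℝ) (hγ : 0 < γ)
    (hSi : Si.PosDef) (hSj : Sj.PosDef)
    (hM : (fromBlocks
            (fromBlocks (Gi + Giᵀ - Si) 0 0 (γ • (1 : Matrix β β ℝ)))
            (fromBlocks (A * Gi)ᵀ (C * Gi)ᵀ Bᵀ Dᵀ)
            (fromBlocks (A * Gi) B (C * Gi) D)
            (fromBlocks Sj 0 0 (γ • (1 : Matrix δ δ ℝ)))).PosDef)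
    (x : α → ℝ) (w : β → ℝ) (hxw : ¬(x = 0 ∧ w = 0)) :
    (A.mulVec x + B.mulVec w) ⬝ᵥ (Sj⁻¹).mulVec (A.mulVec x + B.mulVec w)
      + γ⁻¹ * ((C.mulVec x + D.mulVec w) ⬝ᵥ (C.mulVec x + D.mulVec w))
      < x ⬝ᵥ (Si⁻¹).mulVec x + γ * (w ⬝ᵥ w) := by
  have hTL : (Gi + Giᵀ - Si).PosDef := posdef_block11 (posdef_block11 hM)
  have hdetG : Gi.det ≠ 0 := by
    intro h0
    obtain ⟨y, hy0, hy⟩ := (Matrix.exists_mulVec_eq_zero_iff).mpr h0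
    have h1 := hTL.dotProduct_mulVec_pos hy0
    have h2 := hSi.dotProduct_mulVec_pos hy0
    simp only [star_trivial] at h1 h2
    have e1 : y ⬝ᵥ (Gi + Giᵀ - Si).mulVec y
        = y ⬝ᵥ Gi.mulVec y + y ⬝ᵥ Giᵀ.mulVec y - y ⬝ᵥ Si.mulVec y := by
      simp [Matrix.add_mulVec, Matrix.sub_mulVec, dotProduct_add, dotProduct_sub]
    have e2 : y ⬝ᵥ Gi.mulVec y = 0 := by rw [hy]; simp
    have e3 : y ⬝ᵥ Giᵀ.mulVec y = 0 := by rw [dot_transpose', hy]; simp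
    rw [e1, e2, e3] at h1
    linarith
  have hdetU : IsUnit Gi.det := isUnit_iff_ne_zero.mpr hdetG
  set ξ := (Gi⁻¹).mulVec x with hξ
  have hGx : Gi.mulVec ξ = x := by
    rw [hξ, Matrix.mulVec_mulVec, Matrix.mul_nonsing_inv _ hdetU, Matrix.one_mulVec]
  set u := A.mulVec x + B.mulVec w with hu
  set r := C.mulVec x + D.mulVec w with hr
  have hSjt : Sjᵀ = Sj := symm_of_posdef hSj
  have hSit : Siᵀ = Si := symm_of_posdef hSi
  have hSjd : IsUnit Sj.det := hSj.det_pos.ne'.isUnit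
  have hSid : IsUnit Si.det := hSi.det_pos.ne'.isUnit
  have hPj : (Sj⁻¹).PosDef := hSj.inv
  have hPi : (Si⁻¹).PosDef := hSi.inv
  have hPjt : (Sj⁻¹)ᵀ = Sj⁻¹ := by rw [Matrix.transpose_nonsing_inv, hSjt]
  have hPit : (Si⁻¹)ᵀ = Si⁻¹ := by rw [Matrix.transpose_nonsing_inv, hSit]
  set η := -((Sj⁻¹).mulVec u) with hη
  set ζ := (-γ⁻¹) • r with hζ
  have hane : Sum.elim (Sum.elim ξ w) (Sum.elim η ζ) ≠ 0 := by
    rcases not_and_or.mp hxw with hx | hw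
    · have hξ0 : ξ ≠ 0 := by
        intro h0
        apply hx
        rw [← hGx, h0, Matrix.mulVec_zero]
      intro h0
      apply hξ0
      funext i
      exact congrFun h0 (Sum.inl (Sum.inl i))
    · intro h0
      apply hw
      funext i
      exact congrFun h0 (Sum.inl (Sum.inr i))
  have hpos := hM.dotProduct_mulVec_pos hane
  simp only [star_trivial] at hpos
  simp only [bilin_block] at hpos
  simp only [Matrix.zero_mulVec, dotProduct_zero, zero_dotProduct, add_zero, zero_add,
    Matrix.smul_mulVec, Matrix.one_mulVec, dotProduct_smul, smul_eq_mul,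
    dot_transpose', Matrix.mulVec_mulVec] at hpos
  simp only [← Matrix.mulVec_mulVec] at hpos
  rw [hGx] at hpos
  -- scalar abbreviations
  have eSjPu : Sj.mulVec ((Sj⁻¹).mulVec u) = u := by
    rw [Matrix.mulVec_mulVec, Matrix.mul_nonsing_inv _ hSjd, Matrix.one_mulVec]
  have eA : (A.mulVec x) ⬝ᵥ η + (B.mulVec w) ⬝ᵥ η = -(u ⬝ᵥ (Sj⁻¹).mulVec u) := by
    rw [← add_dotProduct, ← hu, hη, dotProduct_neg, dotProduct_comm]
  have eA' : η ⬝ᵥ (A.mulVec x) + η ⬝ᵥ (B.mulVec w) = -(u ⬝ᵥ (Sj⁻¹).mulVec u) := by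
    rw [← dotProduct_add, ← hu, hη, neg_dotProduct, dotProduct_comm]
  have eC : (C.mulVec x) ⬝ᵥ ζ + (D.mulVec w) ⬝ᵥ ζ = -(γ⁻¹ * (r ⬝ᵥ r)) := by
    rw [← add_dotProduct, ← hr, hζ, dotProduct_smul]
    simp [neg_mul]
  have eC' : ζ ⬝ᵥ (C.mulVec x) + ζ ⬝ᵥ (D.mulVec w) = -(γ⁻¹ * (r ⬝ᵥ r)) := by
    rw [← dotProduct_add, ← hr, hζ, smul_dotProduct]
    simp [neg_mul]
  have eS : η ⬝ᵥ Sj.mulVec η = u ⬝ᵥ (Sj⁻¹).mulVec u := by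
    rw [hη, Matrix.mulVec_neg, dotProduct_neg, neg_dotProduct, neg_neg, eSjPu, dotProduct_comm]
  have eZ : γ * (ζ ⬝ᵥ ζ) = γ⁻¹ * (r ⬝ᵥ r) := by
    rw [hζ, smul_dotProduct, dotProduct_smul, smul_eq_mul, smul_eq_mul]
    field_simp
  -- bound ξᵀ(Gi+Giᵀ-Si)ξ ≤ xᵀ Si⁻¹ x
  have hbound : ξ ⬝ᵥ (Gi + Giᵀ - Si).mulVec ξ ≤ x ⬝ᵥ (Si⁻¹).mulVec x := by
    have h0 := hPi.posSemidef.dotProduct_mulVec_nonneg (x - Si.mulVec ξ)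
    simp only [star_trivial] at h0
    have e5 : (Si⁻¹).mulVec (Si.mulVec ξ) = ξ := by
      rw [Matrix.mulVec_mulVec, Matrix.nonsing_inv_mul _ hSid, Matrix.one_mulVec]
    have e6 : x ⬝ᵥ (Si⁻¹).mulVec (Si.mulVec ξ) = x ⬝ᵥ ξ := by rw [e5]
    have e7 : (Si.mulVec ξ) ⬝ᵥ (Si⁻¹).mulVec x = x ⬝ᵥ ξ := by
      rw [dot_mulVec_symm hPit, e5]
    have e8 : (Si.mulVec ξ) ⬝ᵥ (Si⁻¹).mulVec (Si.mulVec ξ) = ξ ⬝ᵥ Si.mulVec ξ := by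
      rw [e5, dotProduct_comm]
    have hexp : (x - Si.mulVec ξ) ⬝ᵥ (Si⁻¹).mulVec (x - Si.mulVec ξ)
        = x ⬝ᵥ (Si⁻¹).mulVec x - 2 * (x ⬝ᵥ ξ) + ξ ⬝ᵥ Si.mulVec ξ := by
      rw [Matrix.mulVec_sub, dotProduct_sub, sub_dotProduct, sub_dotProduct, e6, e7, e8]
      ring
    rw [hexp] at h0
    have e9 : ξ ⬝ᵥ (Gi + Giᵀ - Si).mulVec ξ = 2 * (x ⬝ᵥ ξ) - ξ ⬝ᵥ Si.mulVec ξ := by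
      have f1 : ξ ⬝ᵥ Gi.mulVec ξ = x ⬝ᵥ ξ := by rw [hGx, dotProduct_comm]
      have f2 : ξ ⬝ᵥ Giᵀ.mulVec ξ = x ⬝ᵥ ξ := by rw [dot_transpose', hGx]
      rw [Matrix.sub_mulVec, Matrix.add_mulVec, dotProduct_sub, dotProduct_add, f1, f2]
      ring
    rw [e9]
    linarith
  linarith [hpos, hbound, eA, eA', eC, eC', eS, eZ]

end dissip


/-- ℓ2-performance analysis for the lifted constrained switched linear
system over the label set L = {0,…,s−1}, with label-dependent input and output
dimensions (for mode l the input lives in ℝ^{(l+1)q} and the output in ℝ^{(l+1)p}). -/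
theorem stmt1
    (s n q p nV : ℕ) (hs : 1 ≤ s)
    (At : Fin s → Matrix (Fin n) (Fin n) ℝ)
    (Bw : (l : Fin s) → Matrix (Fin n) (Fin ((l : ℕ) + 1) × Fin q) ℝ)
    (Ct : (l : Fin s) → Matrix (Fin ((l : ℕ) + 1) × Fin p) (Fin n) ℝ)
    (Dw : (l : Fin s) → Matrix (Fin ((l : ℕ) + 1) × Fin p) (Fin ((l : ℕ) + 1) × Fin q) ℝ)
    (E : Set (Fin nV × Fin nV × Fin s))
    (hout : ∀ i : Fin nV, ∃ j l, (i, j, l) ∈ E)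
    (hin : ∀ j : Fin nV, ∃ i l, (i, j, l) ∈ E)
    (γ : ℝ) (hγ : 0 < γ)
    (S G : Fin nV → Matrix (Fin n) (Fin n) ℝ)
    (hSsymm : ∀ i, (S i).IsSymm)
    (hLMI : ∀ i j l, (i, j, l) ∈ E →
      (Matrix.fromBlocks
        (Matrix.fromBlocks (G i + (G i)ᵀ - S i) 0 0
          (γ • (1 : Matrix (Fin ((l : ℕ) + 1) × Fin q) (Fin ((l : ℕ) + 1) × Fin q) ℝ)))
        (Matrix.fromBlocks (At l * G i)ᵀ (Ct l * G i)ᵀ (Bw l)ᵀ (Dw l)ᵀ)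
        (Matrix.fromBlocks (At l * G i) (Bw l) (Ct l * G i) (Dw l))
        (Matrix.fromBlocks (S j) 0 0
          (γ • (1 : Matrix (Fin ((l : ℕ) + 1) × Fin p) (Fin ((l : ℕ) + 1) × Fin p) ℝ)))).PosDef) :
    ∀ σ : ℕ → Fin s,
      (∃ v : ℕ → Fin nV, ∀ k, (v k, v (k + 1), σ k) ∈ E) →
      -- (i) internal (asymptotic) stability for zero performance input
      ((∀ x : ℕ → Fin n → ℝ,
          (∀ k, x (k + 1) = (At (σ k)).mulVec (x k)) →
          Tendsto x atTop (nhds 0)) ∧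
      -- (ii) ℓ2-gain bound for zero initial state
       (∀ (x : ℕ → Fin n → ℝ)
          (w : (k : ℕ) → Fin ((σ k : ℕ) + 1) × Fin q → ℝ)
          (z : (k : ℕ) → Fin ((σ k : ℕ) + 1) × Fin p → ℝ),
          x 0 = 0 →
          (∀ k, x (k + 1) = (At (σ k)).mulVec (x k) + (Bw (σ k)).mulVec (w k)) →
          (∀ k, z k = (Ct (σ k)).mulVec (x k) + (Dw (σ k)).mulVec (w k)) →
          0 < ∑' k, ENNReal.ofReal (∑ i, (w k i) ^ 2) →
          (∑' k, ENNReal.ofReal (∑ i, (w k i) ^ 2)) < ⊤ →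
          (∑' k, ENNReal.ofReal (∑ i, (z k i) ^ 2)) <
            ENNReal.ofReal γ ^ 2 * ∑' k, ENNReal.ofReal (∑ i, (w k i) ^ 2))) := by
  classical
  intro σ hadm
  obtain ⟨v, hv⟩ := hadm
  haveI hne1 : Nonempty (Fin nV) := ⟨v 0⟩
  haveI hne2 : Nonempty (Fin s) := ⟨σ 0⟩
  have hS : ∀ i, (S i).PosDef := by
    intro j
    obtain ⟨i, l, he⟩ := hin j
    exact posdef_block11 (posdef_block22 (hLMI i j l he))
  have hP : ∀ i, ((S i)⁻¹).PosDef := fun i => (hS i).inv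
  have hPt : ∀ i, ((S i)⁻¹)ᵀ = (S i)⁻¹ := fun i => by
    rw [Matrix.transpose_nonsing_inv, symm_of_posdef (hS i)]
  have hVnn0 : ∀ (i : Fin nV) (y : Fin n → ℝ), 0 ≤ y ⬝ᵥ ((S i)⁻¹).mulVec y := by
    intro i y
    have := (hP i).posSemidef.dotProduct_mulVec_nonneg y
    simpa using this
  have hdotnn : ∀ {m : Type} [Fintype m] (c : m → ℝ), 0 ≤ c ⬝ᵥ c := by
    intro m _ c
    rw [dot_self_sum_sq]
    positivity
  -- strict margin matrices for part (i)
  have hQpd : ∀ i j l, (i, j, l) ∈ E →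
      ((S i)⁻¹ - (At l)ᵀ * ((S j)⁻¹ * At l)).PosDef := by
    intro i j l he
    rw [Matrix.posDef_iff_dotProduct_mulVec]
    constructor
    · show _ᴴ = _
      rw [Matrix.conjTranspose_eq_transpose_of_trivial, Matrix.transpose_sub,
        Matrix.transpose_mul, Matrix.transpose_mul, Matrix.transpose_transpose,
        hPt i, hPt j, Matrix.mul_assoc]
    · intro y hy
      simp only [star_trivial]
      have hd := dissipation (At l) (Bw l) (Ct l) (Dw l) (S i) (S j) (G i) γ hγ
        (hS i) (hS j) (hLMI i j l he) y 0 (fun h => hy h.1)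
      simp only [Matrix.mulVec_zero, add_zero, dotProduct_zero, mul_zero] at hd
      have hexp : y ⬝ᵥ ((S i)⁻¹ - (At l)ᵀ * ((S j)⁻¹ * At l)).mulVec y
          = y ⬝ᵥ ((S i)⁻¹).mulVec y
            - ((At l).mulVec y) ⬝ᵥ ((S j)⁻¹).mulVec ((At l).mulVec y) := by
        rw [Matrix.sub_mulVec, dotProduct_sub]
        congr 1
        rw [← Matrix.mulVec_mulVec, ← Matrix.mulVec_mulVec, dot_transpose']
      rw [hexp]
      have hz : 0 ≤ γ⁻¹ * (((Ct l).mulVec y) ⬝ᵥ ((Ct l).mulVec y)) := by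
        have := hdotnn ((Ct l).mulVec y)
        positivity
      linarith
  constructor
  · -- part (i)
    intro x hx
    -- uniform margin constant
    set εf : Fin nV × Fin nV × Fin s → ℝ := fun t =>
      if h : t ∈ E then (quad_lb (hQpd t.1 t.2.1 t.2.2 h)).choose else 1 with hεfdef
    have hεf_pos : ∀ t, 0 < εf t := by
      intro t
      by_cases h : t ∈ E
      · simp only [hεfdef, dif_pos h]
        exact (quad_lb (hQpd t.1 t.2.1 t.2.2 h)).choose_spec.1
      · simp [hεfdef, dif_neg h]
    have hεf_spec : ∀ t (h : t ∈ E) (y : Fin n → ℝ),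
        εf t * ∑ i, (y i) ^ 2
          ≤ y ⬝ᵥ ((S t.1)⁻¹ - (At t.2.2)ᵀ * ((S t.2.1)⁻¹ * At t.2.2)).mulVec y := by
      intro t h y
      simp only [hεfdef, dif_pos h]
      exact (quad_lb (hQpd t.1 t.2.1 t.2.2 h)).choose_spec.2 y
    set ε := Finset.univ.inf' Finset.univ_nonempty εf with hεdef
    have hε : 0 < ε := by
      rw [hεdef, Finset.lt_inf'_iff]
      exact fun t _ => hεf_pos t
    have hεle : ∀ t, ε ≤ εf t := fun t => Finset.inf'_le _ (Finset.mem_univ t)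
    -- lower bound constant for the P i
    set lamf : Fin nV → ℝ := fun i => (quad_lb (hP i)).choose with hlamfdef
    have hlamf_pos : ∀ i, 0 < lamf i := fun i => (quad_lb (hP i)).choose_spec.1
    have hlamf_spec : ∀ i (y : Fin n → ℝ),
        lamf i * ∑ j, (y j) ^ 2 ≤ y ⬝ᵥ ((S i)⁻¹).mulVec y :=
      fun i => (quad_lb (hP i)).choose_spec.2
    set lam := Finset.univ.inf' Finset.univ_nonempty lamf with hlamdef
    have hlam : 0 < lam := by
      rw [hlamdef, Finset.lt_inf'_iff]
      exact fun i _ => hlamf_pos i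
    have hlamle : ∀ i, lam ≤ lamf i := fun i => Finset.inf'_le _ (Finset.mem_univ i)
    -- upper bound constant for the P i
    set μf : Fin nV → ℝ := fun i => ∑ a, ∑ b, |((S i)⁻¹) a b| with hμfdef
    set μ := max (Finset.univ.sup' Finset.univ_nonempty μf) 1 with hμdef
    have hμ1 : 0 < μ := lt_of_lt_of_le one_pos (le_max_right _ _)
    have hμle : ∀ i, μf i ≤ μ :=
      fun i => le_trans (Finset.le_sup' μf (Finset.mem_univ i)) (le_max_left _ _)
    set V : ℕ → ℝ := fun k => x k ⬝ᵥ ((S (v k))⁻¹).mulVec (x k) with hVdef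
    have hVnn : ∀ k, 0 ≤ V k := fun k => hVnn0 (v k) (x k)
    have hsqnn : ∀ k, 0 ≤ ∑ i, (x k i) ^ 2 := fun k =>
      Finset.sum_nonneg fun i _ => sq_nonneg _
    have hVub : ∀ k, V k ≤ μ * ∑ i, (x k i) ^ 2 := by
      intro k
      refine le_trans (quad_ub' _ _) ?_
      exact mul_le_mul_of_nonneg_right (hμle (v k)) (hsqnn k)
    have hVlb : ∀ k, lam * ∑ i, (x k i) ^ 2 ≤ V k := by
      intro k
      refine le_trans ?_ (hlamf_spec (v k) (x k))
      exact mul_le_mul_of_nonneg_right (hlamle (v k)) (hsqnn k)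
    have hstep : ∀ k, V (k + 1) + ε * ∑ i, (x k i) ^ 2 ≤ V k := by
      intro k
      have hsp := hεf_spec (v k, v (k + 1), σ k) (hv k) (x k)
      have h1 : ε * ∑ i, (x k i) ^ 2 ≤ εf (v k, v (k + 1), σ k) * ∑ i, (x k i) ^ 2 :=
        mul_le_mul_of_nonneg_right (hεle _) (hsqnn k)
      have hexp : x k ⬝ᵥ ((S (v k))⁻¹ - (At (σ k))ᵀ * ((S (v (k + 1)))⁻¹ * At (σ k))).mulVec (x k)
          = V k - V (k + 1) := by
        rw [Matrix.sub_mulVec, dotProduct_sub]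
        have h2 : x k ⬝ᵥ ((At (σ k))ᵀ * ((S (v (k + 1)))⁻¹ * At (σ k))).mulVec (x k)
            = V (k + 1) := by
          rw [← Matrix.mulVec_mulVec, ← Matrix.mulVec_mulVec, dot_transpose', ← hx k]
        rw [h2]
      have h3 := hsp
      rw [hexp] at h3
      linarith
    have hconf : ∀ k, V (k + 1) ≤ (1 - ε / μ) * V k := by
      intro k
      have h1 := hstep k
      have h2 := hVub k
      have h3 : V k / μ ≤ ∑ i, (x k i) ^ 2 := by
        rw [div_le_iff₀ hμ1]
        linarith [h2]
      have h4 : ε * (V k / μ) ≤ ε * ∑ i, (x k i) ^ 2 :=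
        mul_le_mul_of_nonneg_left h3 hε.le
      have h5 : V k - ε * (V k / μ) = (1 - ε / μ) * V k := by ring
      linarith
    set rr := max (1 - ε / μ) 0 with hrrdef
    have hrr0 : 0 ≤ rr := le_max_right _ _
    have hrr1 : rr < 1 := by
      have : 0 < ε / μ := div_pos hε hμ1
      exact max_lt (by linarith) one_pos
    have hgeo : ∀ k, V k ≤ rr ^ k * V 0 := by
      intro k
      induction k with
      | zero => simp
      | succ k ih =>
        have h1 := hconf k
        have h2 : (1 - ε / μ) * V k ≤ rr * V k :=
          mul_le_mul_of_nonneg_right (le_max_left _ _) (hVnn k)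
        have h3 : rr * V k ≤ rr * (rr ^ k * V 0) := mul_le_mul_of_nonneg_left ih hrr0
        calc V (k + 1) ≤ rr * (rr ^ k * V 0) := by linarith
          _ = rr ^ (k + 1) * V 0 := by ring
    have hVt : Tendsto V atTop (nhds 0) := by
      refine squeeze_zero hVnn hgeo ?_
      have := (tendsto_pow_atTop_nhds_zero_of_lt_one hrr0 hrr1).mul_const (V 0)
      simpa using this
    have hsum0 : Tendsto (fun k => ∑ i, (x k i) ^ 2) atTop (nhds 0) := by
      refine squeeze_zero (g := fun k => lam⁻¹ * V k) hsqnn (fun k => ?_) ?_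
      · have h7 := hVlb k
        have h8 : lam⁻¹ * (lam * ∑ i, (x k i) ^ 2) ≤ lam⁻¹ * V k :=
          mul_le_mul_of_nonneg_left h7 (inv_nonneg.mpr hlam.le)
        rwa [← mul_assoc, inv_mul_cancel₀ hlam.ne', one_mul] at h8
      · simpa using hVt.const_mul lam⁻¹
    rw [tendsto_pi_nhds]
    intro i
    have hxi2 : Tendsto (fun k => (x k i) ^ 2) atTop (nhds 0) := by
      refine squeeze_zero (fun k => sq_nonneg _) (fun k => ?_) hsum0
      exact Finset.single_le_sum (f := fun j => (x k j) ^ 2)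
        (fun j _ => sq_nonneg _) (Finset.mem_univ i)
    have habs : Tendsto (fun k => |x k i|) atTop (nhds 0) := by
      have h := (Real.continuous_sqrt.tendsto 0).comp hxi2
      simp only [Function.comp_def, Real.sqrt_sq_eq_abs, Real.sqrt_zero] at h
      exact h
    have hfin : Tendsto (fun k => x k i) atTop (nhds 0) :=
      (tendsto_zero_iff_abs_tendsto_zero _).mpr habs
    simpa using hfin
  · -- part (ii)
    intro x w z hx0 hdyn hz hpos hfin
    set a : ℕ → ℝ := fun k => ∑ i, (z k i) ^ 2 with hadef
    set b : ℕ → ℝ := fun k => ∑ i, (w k i) ^ 2 with hbdef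
    have hga : (∑' k, ENNReal.ofReal (∑ i, (z k i) ^ 2)) = ∑' k, ENNReal.ofReal (a k) := rfl
    have hgb : (∑' k, ENNReal.ofReal (∑ i, (w k i) ^ 2)) = ∑' k, ENNReal.ofReal (b k) := rfl
    rw [hgb] at hpos hfin
    rw [hga, hgb]
    have hann : ∀ k, 0 ≤ a k := fun k => Finset.sum_nonneg fun i _ => sq_nonneg _
    have hbnn : ∀ k, 0 ≤ b k := fun k => Finset.sum_nonneg fun i _ => sq_nonneg _
    have hadot : ∀ k, a k = z k ⬝ᵥ z k := fun k => (dot_self_sum_sq (z k)).symm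
    have hbdot : ∀ k, b k = w k ⬝ᵥ w k := fun k => (dot_self_sum_sq (w k)).symm
    set V : ℕ → ℝ := fun k => x k ⬝ᵥ ((S (v k))⁻¹).mulVec (x k) with hVdef
    have hVnn : ∀ k, 0 ≤ V k := fun k => hVnn0 (v k) (x k)
    have hstep : ∀ k, V (k + 1) + γ⁻¹ * a k ≤ V k + γ * b k := by
      intro k
      by_cases hxw : x k = 0 ∧ w k = 0
      · have hx1 : x (k + 1) = 0 := by rw [hdyn k, hxw.1, hxw.2]; simp
        have hz1 : z k = 0 := by rw [hz k, hxw.1, hxw.2]; simp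
        have e1 : V (k + 1) = 0 := by simp [hVdef, hx1]
        have e2 : V k = 0 := by simp [hVdef, hxw.1]
        have e3 : a k = 0 := by simp [hadef, hz1]
        have e4 : b k = 0 := by simp [hbdef, hxw.2]
        rw [e1, e2, e3, e4]
        simp
      · have hd := dissipation (At (σ k)) (Bw (σ k)) (Ct (σ k)) (Dw (σ k))
          (S (v k)) (S (v (k + 1))) (G (v k)) γ hγ (hS (v k)) (hS (v (k + 1)))
          (hLMI _ _ _ (hv k)) (x k) (w k) hxw
        rw [← hdyn k, ← hz k] at hd
        have e1 : V (k + 1) = x (k + 1) ⬝ᵥ ((S (v (k + 1)))⁻¹).mulVec (x (k + 1)) := rfl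
        have e2 : V k = x k ⬝ᵥ ((S (v k))⁻¹).mulVec (x k) := rfl
        rw [e1, e2, hadot k, hbdot k]
        linarith
    set Wf : ℕ → ℝ := fun N => γ * (∑ k ∈ Finset.range N, b k)
        - γ⁻¹ * (∑ k ∈ Finset.range N, a k) - V N with hWdef
    have hmono : Monotone Wf := by
      apply monotone_nat_of_le_succ
      intro N
      have h1 := hstep N
      simp only [hWdef, Finset.sum_range_succ]
      have h2 : γ⁻¹ * ((∑ k ∈ Finset.range N, a k) + a N)
          = γ⁻¹ * (∑ k ∈ Finset.range N, a k) + γ⁻¹ * a N := by ring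
      have h3 : γ * ((∑ k ∈ Finset.range N, b k) + b N)
          = γ * (∑ k ∈ Finset.range N, b k) + γ * b N := by ring
      linarith
    have hW0 : Wf 0 = 0 := by
      have e2 : V 0 = 0 := by simp [hVdef, hx0]
      simp [hWdef, e2]
    have hWnn : ∀ N, 0 ≤ Wf N := fun N => hW0 ▸ hmono (Nat.zero_le N)
    have hk0ex : ∃ k0, w k0 ≠ 0 := by
      by_contra h
      push_neg at h
      have hb0 : ∀ k, ENNReal.ofReal (b k) = 0 := fun k => by simp [hbdef, h k]
      rw [tsum_congr hb0] at hpos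
      simp at hpos
    obtain ⟨k0, hk0⟩ := hk0ex
    set δ := (V k0 + γ * b k0) - (V (k0 + 1) + γ⁻¹ * a k0) with hδdef
    have hδpos : 0 < δ := by
      have hd := dissipation (At (σ k0)) (Bw (σ k0)) (Ct (σ k0)) (Dw (σ k0))
        (S (v k0)) (S (v (k0 + 1))) (G (v k0)) γ hγ (hS (v k0)) (hS (v (k0 + 1)))
        (hLMI _ _ _ (hv k0)) (x k0) (w k0) (fun h => hk0 h.2)
      rw [← hdyn k0, ← hz k0] at hd
      have e1 : V (k0 + 1) = x (k0 + 1) ⬝ᵥ ((S (v (k0 + 1)))⁻¹).mulVec (x (k0 + 1)) := rfl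
      have e2 : V k0 = x k0 ⬝ᵥ ((S (v k0))⁻¹).mulVec (x k0) := rfl
      rw [hδdef, e1, e2, hadot k0, hbdot k0]
      linarith
    have hWk0 : Wf (k0 + 1) = Wf k0 + δ := by
      simp only [hWdef, hδdef, Finset.sum_range_succ]
      ring
    have hWge : ∀ N, k0 + 1 ≤ N → δ ≤ Wf N := by
      intro N hN
      have h1 : Wf (k0 + 1) ≤ Wf N := hmono hN
      have h2 := hWnn k0
      rw [hWk0] at h1
      linarith
    have hsb : Summable b := by
      have h1 := ENNReal.summable_toReal (ne_of_lt hfin)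
      refine h1.congr fun k => ?_
      exact ENNReal.toReal_ofReal (hbnn k)
    set Wtot := ∑' k, b k with hWtotdef
    have hpart : ∀ N, ∑ k ∈ Finset.range N, b k ≤ Wtot :=
      fun N => Summable.sum_le_tsum (Finset.range N) (fun i _ => hbnn i) hsb
    have hofb : (∑' k, ENNReal.ofReal (b k)) = ENNReal.ofReal Wtot :=
      (ENNReal.ofReal_tsum_of_nonneg hbnn hsb).symm
    have hWtotpos : 0 < Wtot := by
      rw [hofb] at hpos
      exact ENNReal.ofReal_pos.mp hpos
    have hKa : ∀ N, ∑ k ∈ Finset.range N, a k ≤ γ ^ 2 * Wtot - γ * δ := by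
      intro N
      have hN : ∑ k ∈ Finset.range N, a k ≤ ∑ k ∈ Finset.range (max N (k0 + 1)), a k := by
        apply Finset.sum_le_sum_of_subset_of_nonneg
        · exact Finset.range_subset_range.mpr (le_max_left _ _)
        · intro i _ _
          exact hann i
      refine hN.trans ?_
      set M := max N (k0 + 1) with hMdef
      have h1 : δ ≤ Wf M := hWge M (le_max_right _ _)
      have h2 : 0 ≤ V M := hVnn M
      have h3 : ∑ k ∈ Finset.range M, b k ≤ Wtot := hpart M
      have h4 : γ⁻¹ * ∑ k ∈ Finset.range M, a k
          = γ * (∑ k ∈ Finset.range M, b k) - V M - Wf M := by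
        simp only [hWdef]
        ring
      have h5 : γ⁻¹ * ∑ k ∈ Finset.range M, a k ≤ γ * Wtot - δ := by
        rw [h4]
        have h6 := mul_le_mul_of_nonneg_left h3 hγ.le
        linarith
      have h6 : γ * (γ⁻¹ * ∑ k ∈ Finset.range M, a k) = ∑ k ∈ Finset.range M, a k := by
        rw [← mul_assoc, mul_inv_cancel₀ hγ.ne', one_mul]
      calc ∑ k ∈ Finset.range M, a k
          = γ * (γ⁻¹ * ∑ k ∈ Finset.range M, a k) := h6.symm
        _ ≤ γ * (γ * Wtot - δ) := mul_le_mul_of_nonneg_left h5 hγ.le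
        _ = γ ^ 2 * Wtot - γ * δ := by ring
    have hsa : Summable a := summable_of_sum_range_le hann hKa
    have htsa : ∑' k, a k ≤ γ ^ 2 * Wtot - γ * δ := hsa.tsum_le_of_sum_range_le hKa
    have hofa : (∑' k, ENNReal.ofReal (a k)) = ENNReal.ofReal (∑' k, a k) :=
      (ENNReal.ofReal_tsum_of_nonneg hann hsa).symm
    rw [hofa, hofb]
    have hγδ : 0 < γ * δ := mul_pos hγ hδpos
    have hlt : ∑' k, a k < γ ^ 2 * Wtot := lt_of_le_of_lt htsa (by linarith)
    have hR : (ENNReal.ofReal γ) ^ 2 * ENNReal.ofReal Wtot = ENNReal.ofReal (γ ^ 2 * Wtot) := by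
      rw [← ENNReal.ofReal_pow hγ.le, ← ENNReal.ofReal_mul (by positivity)]
    rw [hR]
    exact (ENNReal.ofReal_lt_ofReal_iff (mul_pos (pow_pos hγ 2) hWtotpos)).mpr hlt
end

section
/- Consider the WHRT control system with zero strategy and its lifted matrices: for l ∈ ℕ, Ã_l = A^{l+1}, B̃_l = A^l B, B̃^w_l = [A^l B^w, A^{l−1} B^w, …, B^w] ∈ ℝ^{n×(l+1)q}, C̃_l = col(C, CA, …, CA^l) ∈ ℝ^{(l+1)p×n}, D̃_l = col(D, CB, CAB, …, CA^{l−1}B) ∈ ℝ^{(l+1)p×m}, and D̃^w_l ∈ ℝ^{(l+1)p×(l+1)q} the block lower-triangular matrix whose (i,j) block (0 ≤ j ≤ i ≤ l) equals D^w if i = j and C A^{i−j−1} B^w if i > j, and is zero above the block diagonal. Let M be a set of loss sequences μ : ℕ → {0,1}, each with μ_0 = 1 and infinitely many k with μ_k = 1, and for μ ∈ M let τ(μ) enumerate {k : μ_k = 1} increasingly and α_m(μ) := τ_{m+1} − τ_m − 1; assume α_m(μ) ≤ s−1 for all m and all μ ∈ M. Then for any γ > 0, the WHRT control system with zero strategy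 has ℓ2-performance with gain γ with respect to M if and only if the lifted constrained switched system x̃_{k+1} = (Ã_{σ_k} + B̃_{σ_k} K) x̃_k + B̃^w_{σ_k} w̃_k, z̃_k = (C̃_{σ_k} + D̃_{σ_k} K) x̃_k + D̃^w_{σ_k} w̃_k has ℓ2-performance with gain γ with respect to the set of switching sequences {α(μ) : μ ∈ M}. -/
open Matrix Filter Topology

/-! Lifted matrices of the WHRT control system with zero strategy.
Block vectors in ℝ^{(l+1)q} are modelled as functions on `Fin (l+1) × Fin q`. -/

/-- Ã_l = A^{l+1} -/
noncomputable def liftA {n : ℕ} (A : Matrix (Fin n) (Fin n) ℝ) (l : ℕ) :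
    Matrix (Fin n) (Fin n) ℝ := A ^ (l + 1)

/-- B̃_l = A^l B -/
noncomputable def liftB {n m : ℕ} (A : Matrix (Fin n) (Fin n) ℝ)
    (B : Matrix (Fin n) (Fin m) ℝ) (l : ℕ) : Matrix (Fin n) (Fin m) ℝ := A ^ l * B

/-- B̃^w_l = [A^l B^w, A^{l−1} B^w, …, B^w] -/
noncomputable def liftBw {n q : ℕ} (A : Matrix (Fin n) (Fin n) ℝ)
    (Bw : Matrix (Fin n) (Fin q) ℝ) (l : ℕ) :
    Matrix (Fin n) (Fin (l + 1) × Fin q) ℝ :=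
  fun r jc => (A ^ (l - (jc.1 : ℕ)) * Bw) r jc.2

/-- C̃_l = col(C, CA, …, CA^l) -/
noncomputable def liftC {n p : ℕ} (A : Matrix (Fin n) (Fin n) ℝ)
    (C : Matrix (Fin p) (Fin n) ℝ) (l : ℕ) :
    Matrix (Fin (l + 1) × Fin p) (Fin n) ℝ :=
  fun ir c => (C * A ^ (ir.1 : ℕ)) ir.2 c

/-- D̃_l = col(D, CB, CAB, …, CA^{l−1}B)  (zero strategy) -/
noncomputable def liftD {n m p : ℕ} (A : Matrix (Fin n) (Fin n) ℝ)
    (B : Matrix (Fin n) (Fin m) ℝ) (C : Matrix (Fin p) (Fin n) ℝ)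
    (D : Matrix (Fin p) (Fin m) ℝ) (l : ℕ) :
    Matrix (Fin (l + 1) × Fin p) (Fin m) ℝ :=
  fun ir c => if (ir.1 : ℕ) = 0 then D ir.2 c else (C * A ^ ((ir.1 : ℕ) - 1) * B) ir.2 c

/-- D̃^w_l : block lower-triangular, block (i,j) is D^w if i = j,
C A^{i−j−1} B^w if i > j, and 0 if i < j. -/
noncomputable def liftDw {n q p : ℕ} (A : Matrix (Fin n) (Fin n) ℝ)
    (Bw : Matrix (Fin n) (Fin q) ℝ) (C : Matrix (Fin p) (Fin n) ℝ)
    (Dw : Matrix (Fin p) (Fin q) ℝ) (l : ℕ) :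
    Matrix (Fin (l + 1) × Fin p) (Fin (l + 1) × Fin q) ℝ :=
  fun ir jc =>
    if (ir.1 : ℕ) = (jc.1 : ℕ) then Dw ir.2 jc.2
    else if (jc.1 : ℕ) < (ir.1 : ℕ) then
      (C * A ^ ((ir.1 : ℕ) - (jc.1 : ℕ) - 1) * Bw) ir.2 jc.2
    else 0

/-- τ(μ): increasing enumeration of the set of successful control attempts {k : μ_k = 1}. -/
noncomputable def tauSeq (μ : ℕ → Fin 2) : ℕ → ℕ := Nat.nth (fun k => μ k = 1)

/-- α_m(μ) = τ_{m+1} − τ_m − 1 : number of losses between consecutive successes. -/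
noncomputable def alphaSeq (μ : ℕ → Fin 2) (m : ℕ) : ℕ :=
  tauSeq μ (m + 1) - tauSeq μ m - 1

section Tau
variable {μ : ℕ → Fin 2}

lemma tau_one (hinf : {k | μ k = 1}.Infinite) (m : ℕ) : μ (tauSeq μ m) = 1 :=
  Nat.nth_mem_of_infinite hinf m

lemma tau_mono (hinf : {k | μ k = 1}.Infinite) : StrictMono (tauSeq μ) :=
  Nat.nth_strictMono hinf

lemma tau_zero (h0 : μ 0 = 1) : tauSeq μ 0 = 0 := by
  rw [tauSeq, Nat.nth_zero]
  exact Nat.sInf_eq_zero.2 (Or.inl h0)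

lemma tau_succ (hinf : {k | μ k = 1}.Infinite) (m : ℕ) :
    tauSeq μ (m + 1) = tauSeq μ m + alphaSeq μ m + 1 := by
  have h : tauSeq μ m < tauSeq μ (m + 1) := tau_mono hinf (by omega)
  unfold alphaSeq
  omega

lemma mu_zero_between (hinf : {k | μ k = 1}.Infinite) {m k : ℕ}
    (h1 : tauSeq μ m < k) (h2 : k < tauSeq μ (m + 1)) : μ k = 0 := by
  classical
  by_contra h
  have hk : μ k = 1 := by omega
  have hnth : tauSeq μ (Nat.count (fun k => μ k = 1) k) = k :=
    Nat.nth_count (p := fun k => μ k = 1) hk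
  rw [← hnth] at h1 h2
  have e1 := (tau_mono hinf).lt_iff_lt.1 h1
  have e2 := (tau_mono hinf).lt_iff_lt.1 h2
  omega

lemma exists_interval (h0 : μ 0 = 1) (hinf : {k | μ k = 1}.Infinite) (k : ℕ) :
    ∃ m, tauSeq μ m ≤ k ∧ k < tauSeq μ (m + 1) := by
  have hex : ∃ m, k < tauSeq μ (m + 1) :=
    ⟨k, lt_of_lt_of_le (Nat.lt_succ_self k) ((tau_mono hinf).le_apply)⟩
  classical
  refine ⟨Nat.find hex, ?_, Nat.find_spec hex⟩
  cases hm : Nat.find hex with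
  | zero => rw [tau_zero h0]; exact Nat.zero_le k
  | succ m' =>
    have := Nat.find_min hex (m := m') (by omega)
    exact Nat.not_lt.1 this

lemma in_interval (hinf : {k | μ k = 1}.Infinite) (m : ℕ) (i : Fin (alphaSeq μ m + 1)) :
    tauSeq μ m + (i : ℕ) < tauSeq μ (m + 1) := by
  have := tau_succ hinf m
  have hi := i.isLt
  omega

noncomputable def tauEquiv (h0 : μ 0 = 1) (hinf : {k | μ k = 1}.Infinite) :
    (Σ m : ℕ, Fin (alphaSeq μ m + 1)) ≃ ℕ :=
  Equiv.ofBijective (fun x => tauSeq μ x.1 + (x.2 : ℕ)) (by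
    constructor
    · rintro ⟨a, i⟩ ⟨b, j⟩ hab
      simp only at hab
      have key : ∀ (u v : ℕ), u < v → (iu : Fin (alphaSeq μ u + 1)) →
          (iv : Fin (alphaSeq μ v + 1)) →
          tauSeq μ u + (iu : ℕ) ≠ tauSeq μ v + (iv : ℕ) := by
        intro u v huv iu iv
        have h1 := in_interval hinf u iu
        have h2 : tauSeq μ (u + 1) ≤ tauSeq μ v := (tau_mono hinf).monotone (by omega)
        omega
      rcases lt_trichotomy a b with h | h | h
      · exact absurd hab (key a b h i j)
      · subst h
        have : (i : ℕ) = (j : ℕ) := by omega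
        simp [Fin.ext_iff, this]
      · exact absurd hab.symm (key b a h j i)
    · intro k
      obtain ⟨m, h1, h2⟩ := exists_interval h0 hinf k
      have hs := tau_succ hinf m
      exact ⟨⟨m, ⟨k - tauSeq μ m, by omega⟩⟩, by simp; omega⟩)

lemma tauEquiv_apply (h0 : μ 0 = 1) (hinf : {k | μ k = 1}.Infinite) (m : ℕ)
    (i : Fin (alphaSeq μ m + 1)) :
    tauEquiv h0 hinf ⟨m, i⟩ = tauSeq μ m + (i : ℕ) := rfl

lemma tauEquiv_symm (h0 : μ 0 = 1) (hinf : {k | μ k = 1}.Infinite) (m : ℕ)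
    (i : Fin (alphaSeq μ m + 1)) :
    (tauEquiv h0 hinf).symm (tauSeq μ m + (i : ℕ)) = ⟨m, i⟩ := by
  rw [← tauEquiv_apply h0 hinf m i, Equiv.symm_apply_apply]

lemma tsum_regroup (h0 : μ 0 = 1) (hinf : {k | μ k = 1}.Infinite) (F : ℕ → ENNReal) :
    ∑' k, F k = ∑' m, ∑ i : Fin (alphaSeq μ m + 1), F (tauSeq μ m + (i : ℕ)) := by
  rw [← Equiv.tsum_eq (tauEquiv h0 hinf) F]
  rw [show (fun x => F (tauEquiv h0 hinf x)) = fun x : Σ m : ℕ, Fin (alphaSeq μ m + 1) =>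
      F (tauSeq μ x.1 + (x.2 : ℕ)) from rfl]
  rw [ENNReal.tsum_sigma']
  exact tsum_congr fun m => tsum_fintype _

end Tau

section Dyn
variable {n mm q p : ℕ}
variable (A : Matrix (Fin n) (Fin n) ℝ) (B : Matrix (Fin n) (Fin mm) ℝ)
  (Bw : Matrix (Fin n) (Fin q) ℝ) (C : Matrix (Fin p) (Fin n) ℝ)
  (D : Matrix (Fin p) (Fin mm) ℝ) (Dw : Matrix (Fin p) (Fin q) ℝ)
  (K : Matrix (Fin mm) (Fin n) ℝ)
variable {μ : ℕ → Fin 2}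

lemma mulVec_sum' {a b : ℕ} (M : Matrix (Fin a) (Fin b) ℝ) {ι : Type*} (s : Finset ι)
    (f : ι → Fin b → ℝ) : M.mulVec (∑ t ∈ s, f t) = ∑ t ∈ s, M.mulVec (f t) := by
  rw [← Matrix.mulVecLin_apply, map_sum]
  simp [Matrix.mulVecLin_apply]

lemma liftSum1 (l : ℕ) : liftA A l + liftB A B l * K = A ^ l * (A + B * K) := by
  rw [liftA, liftB, pow_succ, mul_add]
  congr 1
  rw [Matrix.mul_assoc]

lemma liftBw_mulVec (l : ℕ) (W : Fin (l + 1) × Fin q → ℝ) :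
    (liftBw A Bw l).mulVec W =
      ∑ j : Fin (l + 1), (A ^ (l - (j : ℕ)) * Bw).mulVec (fun c => W (j, c)) := by
  ext r
  simp [Matrix.mulVec, dotProduct, liftBw, Fintype.sum_prod_type, Finset.sum_apply]

lemma sum_ite_lt {M : Type*} [AddCommMonoid M] (L i : ℕ) (hi : i ≤ L) (f : ℕ → M) :
    ∑ t ∈ Finset.range L, (if t < i then f t else 0) = ∑ t ∈ Finset.range i, f t := by
  rw [← Finset.sum_subset (Finset.range_mono hi)
    (fun t _ ht => by simp [Finset.mem_range.not.1 ht])]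
  exact Finset.sum_congr rfl fun t ht => by simp [Finset.mem_range.1 ht]

lemma lifted_output_apply (l : ℕ) (i : Fin (l + 1)) (v : Fin n → ℝ)
    (W : Fin (l + 1) × Fin q → ℝ) (r : Fin p) :
    ((liftC A C l + liftD A B C D l * K).mulVec v + (liftDw A Bw C Dw l).mulVec W) (i, r)
    = ((C * A ^ (i : ℕ)).mulVec v) r
      + (if (i : ℕ) = 0 then ((D * K).mulVec v) r
          else ((C * A ^ ((i : ℕ) - 1) * B * K).mulVec v) r)
      + ((Dw.mulVec (fun c => W (i, c))) r
      + ∑ j : Fin (l + 1), (if (j : ℕ) < (i : ℕ) then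
          ((C * A ^ ((i : ℕ) - (j : ℕ) - 1) * Bw).mulVec (fun c => W (j, c))) r else 0)) := by
  have h1 : ((liftC A C l + liftD A B C D l * K).mulVec v) (i, r)
      = ((C * A ^ (i : ℕ)).mulVec v) r
      + (if (i : ℕ) = 0 then ((D * K).mulVec v) r
          else ((C * A ^ ((i : ℕ) - 1) * B * K).mulVec v) r) := by
    rw [Matrix.add_mulVec]
    have e1 : (liftC A C l).mulVec v (i, r) = ((C * A ^ (i : ℕ)).mulVec v) r := rfl
    have e2 : (liftD A B C D l * K).mulVec v (i, r)
        = (if (i : ℕ) = 0 then ((D * K).mulVec v) r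
            else ((C * A ^ ((i : ℕ) - 1) * B * K).mulVec v) r) := by
      rw [← Matrix.mulVec_mulVec]
      by_cases hi : (i : ℕ) = 0
      · rw [if_pos hi, ← Matrix.mulVec_mulVec]
        simp only [Matrix.mulVec, dotProduct, liftD, hi, if_true]
      · rw [if_neg hi, ← Matrix.mulVec_mulVec]
        simp only [Matrix.mulVec, dotProduct, liftD, hi, if_false]
    rw [Pi.add_apply, e1, e2]
  have h2 : ((liftDw A Bw C Dw l).mulVec W) (i, r)
      = (Dw.mulVec (fun c => W (i, c))) r
      + ∑ j : Fin (l + 1), (if (j : ℕ) < (i : ℕ) then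
          ((C * A ^ ((i : ℕ) - (j : ℕ) - 1) * Bw).mulVec (fun c => W (j, c))) r else 0) := by
    have key : ∀ j : Fin (l + 1), ∑ c : Fin q, liftDw A Bw C Dw l (i, r) (j, c) * W (j, c)
        = (if i = j then (Dw.mulVec (fun c => W (j, c))) r else 0)
        + (if (j : ℕ) < (i : ℕ) then
            ((C * A ^ ((i : ℕ) - (j : ℕ) - 1) * Bw).mulVec (fun c => W (j, c))) r else 0) := by
      intro j
      by_cases hij : (i : ℕ) = (j : ℕ)
      · have : i = j := Fin.ext hij
        simp [liftDw, hij, this, Matrix.mulVec, dotProduct]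
      · have hne : ¬ i = j := fun h => hij (by rw [h])
        by_cases hlt : (j : ℕ) < (i : ℕ) <;>
          simp [liftDw, hij, hne, hlt, Matrix.mulVec, dotProduct]
    calc ((liftDw A Bw C Dw l).mulVec W) (i, r)
        = ∑ j : Fin (l + 1), ∑ c : Fin q, liftDw A Bw C Dw l (i, r) (j, c) * W (j, c) := by
          simp [Matrix.mulVec, dotProduct, Fintype.sum_prod_type]
      _ = _ := by
          simp only [key, Finset.sum_add_distrib, Finset.sum_ite_eq, Finset.mem_univ, if_true]
  rw [Pi.add_apply, h1, h2]

lemma step_formula (hinf : {k | μ k = 1}.Infinite) {x : ℕ → Fin n → ℝ} {w : ℕ → Fin q → ℝ}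
    (hdyn : ∀ k, x (k + 1) = A.mulVec (x k) + ((μ k : ℕ) : ℝ) • (B * K).mulVec (x k)
      + Bw.mulVec (w k)) (N : ℕ) :
    ∀ j, 1 ≤ j → j ≤ alphaSeq μ N + 1 →
      x (tauSeq μ N + j) = (A ^ (j - 1) * (A + B * K)).mulVec (x (tauSeq μ N)) +
        ∑ t ∈ Finset.range j, (A ^ (j - 1 - t) * Bw).mulVec (w (tauSeq μ N + t)) := by
  intro j
  induction j with
  | zero => intro h1 _; omega
  | succ j ih =>
    intro _ h2
    rcases Nat.eq_zero_or_pos j with hj | hj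
    · subst hj
      have hd := hdyn (tauSeq μ N)
      rw [tau_one hinf N] at hd
      norm_num at hd
      simpa [Matrix.add_mulVec] using hd
    · have hτ := tau_succ hinf N
      have hμ0 : μ (tauSeq μ N + j) = 0 :=
        mu_zero_between (m := N) (k := tauSeq μ N + j) hinf (by omega) (by omega)
      have hd := hdyn (tauSeq μ N + j)
      rw [hμ0] at hd
      norm_num at hd
      have hih := ih (by omega) (by omega)
      have hsplit : tauSeq μ N + (j + 1) = (tauSeq μ N + j) + 1 := by omega
      have key1 : A * (A ^ (j - 1) * (A + B * K)) = A ^ j * (A + B * K) := by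
        rw [← Matrix.mul_assoc, ← pow_succ']
        congr 2
        omega
      have key2 : ∀ t ∈ Finset.range j,
          A.mulVec ((A ^ (j - 1 - t) * Bw).mulVec (w (tauSeq μ N + t)))
          = (A ^ (j - t) * Bw).mulVec (w (tauSeq μ N + t)) := by
        intro t ht
        have ht' := Finset.mem_range.1 ht
        rw [Matrix.mulVec_mulVec, ← Matrix.mul_assoc, ← pow_succ']
        have : j - 1 - t + 1 = j - t := by omega
        rw [this]
      calc x (tauSeq μ N + (j + 1))
          = A.mulVec (x (tauSeq μ N + j)) + Bw.mulVec (w (tauSeq μ N + j)) := by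
            rw [hsplit]; exact hd
        _ = (A ^ j * (A + B * K)).mulVec (x (tauSeq μ N)) +
            (∑ t ∈ Finset.range j, (A ^ (j - t) * Bw).mulVec (w (tauSeq μ N + t)) +
              Bw.mulVec (w (tauSeq μ N + j))) := by
            rw [hih, Matrix.mulVec_add, mulVec_sum', Matrix.mulVec_mulVec, key1,
              Finset.sum_congr rfl key2, add_assoc]
        _ = _ := by
            rw [Finset.sum_range_succ]
            have e0 : j + 1 - 1 = j := by omega
            rw [e0]
            have e2 : (A ^ (j - j) * Bw) = Bw := by simp
            rw [e2]

lemma bridgeState (hinf : {k | μ k = 1}.Infinite) {x : ℕ → Fin n → ℝ} {w : ℕ → Fin q → ℝ}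
    (hdyn : ∀ k, x (k + 1) = A.mulVec (x k) + ((μ k : ℕ) : ℝ) • (B * K).mulVec (x k)
      + Bw.mulVec (w k)) (N : ℕ) :
    x (tauSeq μ (N + 1)) =
      (liftA A (alphaSeq μ N) + liftB A B (alphaSeq μ N) * K).mulVec (x (tauSeq μ N))
      + (liftBw A Bw (alphaSeq μ N)).mulVec
          (fun jc => w (tauSeq μ N + (jc.1 : ℕ)) jc.2) := by
  have hs := step_formula A B Bw K hinf hdyn N (alphaSeq μ N + 1) (by omega) le_rfl
  have e0 : tauSeq μ (N + 1) = tauSeq μ N + (alphaSeq μ N + 1) := by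
    rw [tau_succ hinf N]; omega
  simp only [Nat.add_sub_cancel] at hs
  rw [e0, hs, liftSum1, liftBw_mulVec]
  congr 1
  rw [Fin.sum_univ_eq_sum_range
    (fun t => (A ^ (alphaSeq μ N - t) * Bw).mulVec (w (tauSeq μ N + t)))]

lemma midFormula (hinf : {k | μ k = 1}.Infinite) {x : ℕ → Fin n → ℝ}
    (hdyn : ∀ k, x (k + 1) = A.mulVec (x k) + ((μ k : ℕ) : ℝ) • (B * K).mulVec (x k))
    (N i : ℕ) (hi1 : 1 ≤ i) (hi2 : i ≤ alphaSeq μ N) :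
    x (tauSeq μ N + i) = (A ^ (i - 1) * (A + B * K)).mulVec (x (tauSeq μ N)) := by
  have hdyn' : ∀ k, x (k + 1) = A.mulVec (x k) + ((μ k : ℕ) : ℝ) • (B * K).mulVec (x k)
      + (0 : Matrix (Fin n) (Fin 0) ℝ).mulVec ((fun _ => (0 : Fin 0 → ℝ)) k) := by
    intro k
    simp [hdyn k]
  have := step_formula A B (0 : Matrix (Fin n) (Fin 0) ℝ) K hinf hdyn' N i hi1 (by omega)
  simpa using this

lemma bridgeOutput (hinf : {k | μ k = 1}.Infinite) {x : ℕ → Fin n → ℝ} {w : ℕ → Fin q → ℝ}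
    {z : ℕ → Fin p → ℝ}
    (hdyn : ∀ k, x (k + 1) = A.mulVec (x k) + ((μ k : ℕ) : ℝ) • (B * K).mulVec (x k)
      + Bw.mulVec (w k))
    (hz : ∀ k, z k = C.mulVec (x k) + ((μ k : ℕ) : ℝ) • (D * K).mulVec (x k)
      + Dw.mulVec (w k)) (N : ℕ) :
    (fun ir : Fin (alphaSeq μ N + 1) × Fin p => z (tauSeq μ N + (ir.1 : ℕ)) ir.2)
    = (liftC A C (alphaSeq μ N) + liftD A B C D (alphaSeq μ N) * K).mulVec (x (tauSeq μ N))
      + (liftDw A Bw C Dw (alphaSeq μ N)).mulVec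
          (fun jc => w (tauSeq μ N + (jc.1 : ℕ)) jc.2) := by
  funext ir
  obtain ⟨i, r⟩ := ir
  rw [lifted_output_apply]
  by_cases hi : (i : ℕ) = 0
  · have hz0 := hz (tauSeq μ N)
    rw [tau_one hinf N] at hz0
    norm_num at hz0
    have hie : tauSeq μ N + (i : ℕ) = tauSeq μ N := by omega
    rw [hie, hz0, if_pos hi]
    have hsum : ∑ j : Fin (alphaSeq μ N + 1), (if (j : ℕ) < (i : ℕ) then
        ((C * A ^ ((i : ℕ) - (j : ℕ) - 1) * Bw).mulVec
          (fun c => w (tauSeq μ N + (j : ℕ)) c)) r else 0) = 0 :=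
      Finset.sum_eq_zero fun j _ => if_neg (by omega)
    rw [hsum, add_zero]
    simp [hi, pow_zero, Matrix.mul_one]
  · have hii := i.isLt
    have hτ := tau_succ hinf N
    have hμ0 : μ (tauSeq μ N + (i : ℕ)) = 0 :=
      mu_zero_between (m := N) (k := tauSeq μ N + (i : ℕ)) hinf (by omega) (by omega)
    have hzz := hz (tauSeq μ N + (i : ℕ))
    rw [hμ0] at hzz
    norm_num at hzz
    have hx := step_formula A B Bw K hinf hdyn N (i : ℕ) (by omega) (by omega)
    rw [if_neg hi, hzz, hx]
    rw [Matrix.mulVec_add, Matrix.mulVec_mulVec, mulVec_sum']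
    have hCmat : C * (A ^ ((i : ℕ) - 1) * (A + B * K))
        = C * A ^ (i : ℕ) + C * A ^ ((i : ℕ) - 1) * B * K := by
      rw [← Matrix.mul_assoc, Matrix.mul_add]
      congr 1
      · rw [Matrix.mul_assoc, ← pow_succ]
        congr 2
        omega
      · rw [← Matrix.mul_assoc]
    rw [hCmat, Matrix.add_mulVec]
    have hsum2 : ∑ j : Fin (alphaSeq μ N + 1), (if (j : ℕ) < (i : ℕ) then
        ((C * A ^ ((i : ℕ) - (j : ℕ) - 1) * Bw).mulVec
          (fun c => w (tauSeq μ N + (j : ℕ)) c)) r else 0)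
        = ∑ t ∈ Finset.range (i : ℕ),
            ((C * A ^ ((i : ℕ) - 1 - t) * Bw).mulVec (w (tauSeq μ N + t))) r := by
      rw [Fin.sum_univ_eq_sum_range (fun t => if t < (i : ℕ) then
        ((C * A ^ ((i : ℕ) - t - 1) * Bw).mulVec (fun c => w (tauSeq μ N + t) c)) r else 0)]
      rw [sum_ite_lt (alphaSeq μ N + 1) (i : ℕ) (by omega)]
      exact Finset.sum_congr rfl fun t ht => by
        have e : (i : ℕ) - t - 1 = (i : ℕ) - 1 - t := by omega
        rw [e]
    rw [hsum2]
    have hsum3 : ∀ t ∈ Finset.range (i : ℕ),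
        C.mulVec ((A ^ ((i : ℕ) - 1 - t) * Bw).mulVec (w (tauSeq μ N + t)))
        = (C * A ^ ((i : ℕ) - 1 - t) * Bw).mulVec (w (tauSeq μ N + t)) := by
      intro t ht
      rw [Matrix.mulVec_mulVec, Matrix.mul_assoc]
    rw [Finset.sum_congr rfl hsum3]
    simp [Finset.sum_apply]
    ring
end Dyn
section Part2
variable {μ : ℕ → Fin 2}

lemma tsum_sq_regroup {d : ℕ} (h0 : μ 0 = 1) (hinf : {k | μ k = 1}.Infinite)
    (W : ℕ → Fin d → ℝ) :
    ∑' k, ENNReal.ofReal (∑ c, (W k c) ^ 2)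
    = ∑' N, ENNReal.ofReal (∑ jc : Fin (alphaSeq μ N + 1) × Fin d,
        (W (tauSeq μ N + (jc.1 : ℕ)) jc.2) ^ 2) := by
  rw [tsum_regroup h0 hinf (fun k => ENNReal.ofReal (∑ c, (W k c) ^ 2))]
  refine tsum_congr fun N => ?_
  rw [Fintype.sum_prod_type (f := fun jc : Fin (alphaSeq μ N + 1) × Fin d =>
    (W (tauSeq μ N + (jc.1 : ℕ)) jc.2) ^ 2)]
  rw [ENNReal.ofReal_sum_of_nonneg
    (fun i _ => Finset.sum_nonneg fun c _ => sq_nonneg _)]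

noncomputable def buildTraj {n q : ℕ} (A BK : Matrix (Fin n) (Fin n) ℝ)
    (Bw : Matrix (Fin n) (Fin q) ℝ) (μ : ℕ → Fin 2) (w : ℕ → Fin q → ℝ)
    (x0 : Fin n → ℝ) : ℕ → Fin n → ℝ
  | 0 => x0
  | k + 1 => A.mulVec (buildTraj A BK Bw μ w x0 k)
      + ((μ k : ℕ) : ℝ) • BK.mulVec (buildTraj A BK Bw μ w x0 k) + Bw.mulVec (w k)

lemma stability_fill {n : ℕ} (h0 : μ 0 = 1) (hinf : {k | μ k = 1}.Infinite)
    (s : ℕ) (hs : 1 ≤ s) (hα : ∀ j, alphaSeq μ j ≤ s - 1)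
    (P : ℕ → Matrix (Fin n) (Fin n) ℝ) (hP0 : P 0 = 1)
    {x : ℕ → Fin n → ℝ}
    (hmid : ∀ N i, 1 ≤ i → i ≤ alphaSeq μ N →
      x (tauSeq μ N + i) = (P i).mulVec (x (tauSeq μ N)))
    (hlift : Tendsto (fun N => x (tauSeq μ N)) atTop (nhds 0)) :
    Tendsto x atTop (nhds 0) := by
  rw [Metric.tendsto_atTop]
  intro ε hε
  have hcont : ∀ i : ℕ, ∃ δ > 0, ∀ v : Fin n → ℝ,
      dist v 0 < δ → dist ((P i).mulVec v) 0 < ε := by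
    intro i
    have hc : Continuous fun v : Fin n → ℝ => (P i).mulVec v := by
      have := LinearMap.continuous_of_finiteDimensional ((P i).mulVecLin)
      exact this
    have htd : Tendsto (fun v : Fin n → ℝ => (P i).mulVec v) (nhds 0) (nhds 0) := by
      have := hc.tendsto 0
      simpa [Matrix.mulVec_zero] using this
    obtain ⟨δ, hδ, hδ2⟩ := Metric.tendsto_nhds_nhds.1 htd ε hε
    exact ⟨δ, hδ, fun v hv => hδ2 hv⟩
  choose δ hδpos hδspec using hcont
  have hne : (Finset.range s).Nonempty := Finset.nonempty_range_iff.2 (by omega)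
  set δm := (Finset.range s).inf' hne δ with hδm_def
  have hδm : 0 < δm := (Finset.lt_inf'_iff hne).2 fun i _ => hδpos i
  obtain ⟨Nm, hNm⟩ := Metric.tendsto_atTop.1 hlift δm hδm
  refine ⟨tauSeq μ Nm, fun k hk => ?_⟩
  obtain ⟨N, hN1, hN2⟩ := exists_interval h0 hinf k
  have hNge : Nm ≤ N := by
    by_contra hcon
    have : tauSeq μ (N + 1) ≤ tauSeq μ Nm := (tau_mono hinf).monotone (by omega)
    omega
  have hτs := tau_succ hinf N
  have hi : k - tauSeq μ N ≤ alphaSeq μ N := by omega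
  have hilt : k - tauSeq μ N < s := by have := hα N; omega
  have hxk : x k = (P (k - tauSeq μ N)).mulVec (x (tauSeq μ N)) := by
    rcases Nat.eq_zero_or_pos (k - tauSeq μ N) with h | h
    · have hkN : k = tauSeq μ N := by omega
      rw [h, hP0, hkN]
      simp [Matrix.one_mulVec]
    · have := hmid N (k - tauSeq μ N) h hi
      rw [show tauSeq μ N + (k - tauSeq μ N) = k from by omega] at this
      exact this
  have hd := hNm N hNge
  rw [hxk]
  exact hδspec (k - tauSeq μ N) (x (tauSeq μ N))
    (lt_of_lt_of_le hd (Finset.inf'_le δ (Finset.mem_range.2 hilt)))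

end Part2
lemma liftBw_zero_vec {n l : ℕ} (A : Matrix (Fin n) (Fin n) ℝ)
    (v : Fin (l + 1) × Fin 0 → ℝ) :
    (liftBw A (0 : Matrix (Fin n) (Fin 0) ℝ) l).mulVec v = 0 := by
  ext r
  simp [Matrix.mulVec, dotProduct]

/-- the WHRT control system with zero strategy has ℓ2-performance with
gain γ w.r.t. the set M of loss sequences if and only if the lifted constrained
switched system has ℓ2-performance with gain γ w.r.t. {α(μ) : μ ∈ M}. -/
theorem stmt5
    (n m q p s : ℕ) (hs : 1 ≤ s)
    (A : Matrix (Fin n) (Fin n) ℝ) (B : Matrix (Fin n) (Fin m) ℝ)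
    (Bw : Matrix (Fin n) (Fin q) ℝ) (C : Matrix (Fin p) (Fin n) ℝ)
    (D : Matrix (Fin p) (Fin m) ℝ) (Dw : Matrix (Fin p) (Fin q) ℝ)
    (K : Matrix (Fin m) (Fin n) ℝ)
    (M : Set (ℕ → Fin 2))
    (hM : ∀ μ ∈ M, μ 0 = 1 ∧ {k | μ k = 1}.Infinite ∧ ∀ j, alphaSeq μ j ≤ s - 1)
    (γ : ℝ) (hγ : 0 < γ) :
    -- the WHRT control system with zero strategy has ℓ2-performance with gain γ w.r.t. M
    ((∀ μ ∈ M,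
      (∀ x : ℕ → Fin n → ℝ,
          (∀ k, x (k + 1) =
            A.mulVec (x k) + ((μ k : ℕ) : ℝ) • (B * K).mulVec (x k)) →
          Tendsto x atTop (nhds 0)) ∧
      (∀ (x : ℕ → Fin n → ℝ) (w : ℕ → Fin q → ℝ) (z : ℕ → Fin p → ℝ),
          x 0 = 0 →
          (∀ k, x (k + 1) =
            A.mulVec (x k) + ((μ k : ℕ) : ℝ) • (B * K).mulVec (x k) + Bw.mulVec (w k)) →
          (∀ k, z k =
            C.mulVec (x k) + ((μ k : ℕ) : ℝ) • (D * K).mulVec (x k) + Dw.mulVec (w k)) →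
          0 < ∑' k, ENNReal.ofReal (∑ i, (w k i) ^ 2) →
          (∑' k, ENNReal.ofReal (∑ i, (w k i) ^ 2)) < ⊤ →
          (∑' k, ENNReal.ofReal (∑ i, (z k i) ^ 2)) <
            ENNReal.ofReal γ ^ 2 * ∑' k, ENNReal.ofReal (∑ i, (w k i) ^ 2))))
    ↔
    -- the lifted constrained switched system has ℓ2-performance with gain γ
    -- w.r.t. the set of switching sequences {α(μ) : μ ∈ M}
    (∀ σ : ℕ → ℕ, (∃ μ ∈ M, σ = alphaSeq μ) →
      (∀ x : ℕ → Fin n → ℝ,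
          (∀ k, x (k + 1) =
            (liftA A (σ k) + liftB A B (σ k) * K).mulVec (x k)) →
          Tendsto x atTop (nhds 0)) ∧
      (∀ (x : ℕ → Fin n → ℝ)
          (w : (k : ℕ) → Fin (σ k + 1) × Fin q → ℝ)
          (z : (k : ℕ) → Fin (σ k + 1) × Fin p → ℝ),
          x 0 = 0 →
          (∀ k, x (k + 1) =
            (liftA A (σ k) + liftB A B (σ k) * K).mulVec (x k) +
            (liftBw A Bw (σ k)).mulVec (w k)) →
          (∀ k, z k =
            (liftC A C (σ k) + liftD A B C D (σ k) * K).mulVec (x k) +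
            (liftDw A Bw C Dw (σ k)).mulVec (w k)) →
          0 < ∑' k, ENNReal.ofReal (∑ i, (w k i) ^ 2) →
          (∑' k, ENNReal.ofReal (∑ i, (w k i) ^ 2)) < ⊤ →
          (∑' k, ENNReal.ofReal (∑ i, (z k i) ^ 2)) <
            ENNReal.ofReal γ ^ 2 * ∑' k, ENNReal.ofReal (∑ i, (w k i) ^ 2))) := by
  constructor
  · -- original ⇒ lifted
    intro H σ hσ
    obtain ⟨μ, hμM, rfl⟩ := hσ
    obtain ⟨h0, hinf, hα⟩ := hM μ hμM
    constructor
    · -- stability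
      intro xt hxt
      set x : ℕ → Fin n → ℝ :=
        buildTraj A (B * K) (0 : Matrix (Fin n) (Fin 0) ℝ) μ (fun _ => 0) (xt 0) with hxdef
      have hxs : ∀ k, x (k + 1) =
          A.mulVec (x k) + ((μ k : ℕ) : ℝ) • (B * K).mulVec (x k) := by
        intro k
        simp [hxdef, buildTraj]
      have hxs' : ∀ k, x (k + 1) = A.mulVec (x k)
          + ((μ k : ℕ) : ℝ) • (B * K).mulVec (x k)
          + (0 : Matrix (Fin n) (Fin 0) ℝ).mulVec ((fun _ => (0 : Fin 0 → ℝ)) k) := by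
        intro k
        simp [hxs k]
      have hsample : ∀ N, x (tauSeq μ N) = xt N := by
        intro N
        induction N with
        | zero => rw [tau_zero h0]; rfl
        | succ N ih =>
          have hb := bridgeState A B (0 : Matrix (Fin n) (Fin 0) ℝ) K hinf hxs' N
          rw [liftBw_zero_vec, add_zero, ih] at hb
          rw [hb, hxt N]
      have hT := (H μ hμM).1 x hxs
      have h2 : Tendsto (fun N => x (tauSeq μ N)) atTop (nhds 0) :=
        hT.comp ((tau_mono hinf).tendsto_atTop)
      exact Tendsto.congr hsample h2
    · -- performance
      intro xt wt zt hxt0 hxtdyn hztdyn hpos hfin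
      set e := tauEquiv h0 hinf with he
      set wf : ℕ → Fin q → ℝ := fun k c => wt (e.symm k).1 ((e.symm k).2, c) with hwf
      have hwsample : ∀ N (i : Fin (alphaSeq μ N + 1)) (c : Fin q),
          wf (tauSeq μ N + (i : ℕ)) c = wt N (i, c) := by
        intro N i c
        simp only [hwf, he]
        rw [tauEquiv_symm h0 hinf N i]
      set x : ℕ → Fin n → ℝ := buildTraj A (B * K) Bw μ wf 0 with hxdef
      have hx0 : x 0 = 0 := rfl
      have hxdyn : ∀ k, x (k + 1) = A.mulVec (x k)
          + ((μ k : ℕ) : ℝ) • (B * K).mulVec (x k) + Bw.mulVec (wf k) := by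
        intro k
        simp [hxdef, buildTraj]
      set z : ℕ → Fin p → ℝ := fun k => C.mulVec (x k)
          + ((μ k : ℕ) : ℝ) • (D * K).mulVec (x k) + Dw.mulVec (wf k) with hzdef
      have hzdyn : ∀ k, z k = C.mulVec (x k)
          + ((μ k : ℕ) : ℝ) • (D * K).mulVec (x k) + Dw.mulVec (wf k) := fun k => rfl
      have hwvec : ∀ N, (fun jc : Fin (alphaSeq μ N + 1) × Fin q =>
          wf (tauSeq μ N + (jc.1 : ℕ)) jc.2) = wt N := by
        intro N
        funext jc
        exact hwsample N jc.1 jc.2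
      have hsample : ∀ N, x (tauSeq μ N) = xt N := by
        intro N
        induction N with
        | zero => rw [tau_zero h0, hx0, hxt0]
        | succ N ih =>
          have hb := bridgeState A B Bw K hinf hxdyn N
          rw [ih, hwvec N] at hb
          rw [hb, hxtdyn N]
      have hzsample : ∀ N, (fun ir : Fin (alphaSeq μ N + 1) × Fin p =>
          z (tauSeq μ N + (ir.1 : ℕ)) ir.2) = zt N := by
        intro N
        rw [bridgeOutput A B Bw C D Dw K hinf hxdyn hzdyn N, hsample N, hwvec N, ← hztdyn N]
      have hw_eq : ∑' k, ENNReal.ofReal (∑ i, (wf k i) ^ 2)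
          = ∑' k, ENNReal.ofReal (∑ i, (wt k i) ^ 2) := by
        rw [tsum_sq_regroup h0 hinf wf]
        refine tsum_congr fun N => ?_
        congr 1
        refine Finset.sum_congr rfl fun jc _ => ?_
        rw [hwsample N jc.1 jc.2]
      have hz_eq : ∑' k, ENNReal.ofReal (∑ i, (z k i) ^ 2)
          = ∑' k, ENNReal.ofReal (∑ i, (zt k i) ^ 2) := by
        rw [tsum_sq_regroup h0 hinf z]
        refine tsum_congr fun N => ?_
        congr 1
        refine Finset.sum_congr rfl fun ir _ => ?_
        rw [congrFun (hzsample N) ir]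
      have hperf := (H μ hμM).2 x wf z hx0 hxdyn hzdyn
        (by rw [hw_eq]; exact hpos) (by rw [hw_eq]; exact hfin)
      rw [hw_eq, hz_eq] at hperf
      exact hperf
  · -- lifted ⇒ original
    intro H μ hμM
    obtain ⟨h0, hinf, hα⟩ := hM μ hμM
    have HL := H (alphaSeq μ) ⟨μ, hμM, rfl⟩
    constructor
    · -- stability
      intro x hxdyn
      have hxdyn' : ∀ k, x (k + 1) = A.mulVec (x k)
          + ((μ k : ℕ) : ℝ) • (B * K).mulVec (x k)
          + (0 : Matrix (Fin n) (Fin 0) ℝ).mulVec ((fun _ => (0 : Fin 0 → ℝ)) k) := by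
        intro k
        simp [hxdyn k]
      have hliftdyn : ∀ N, x (tauSeq μ (N + 1)) =
          (liftA A (alphaSeq μ N) + liftB A B (alphaSeq μ N) * K).mulVec
            (x (tauSeq μ N)) := by
        intro N
        have hb := bridgeState A B (0 : Matrix (Fin n) (Fin 0) ℝ) K hinf hxdyn' N
        rw [liftBw_zero_vec, add_zero] at hb
        exact hb
      have ht := HL.1 (fun N => x (tauSeq μ N)) hliftdyn
      have hmid : ∀ N i, 1 ≤ i → i ≤ alphaSeq μ N → x (tauSeq μ N + i) =
          ((fun i => if i = 0 then (1 : Matrix (Fin n) (Fin n) ℝ)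
            else A ^ (i - 1) * (A + B * K)) i).mulVec (x (tauSeq μ N)) := by
        intro N i hi1 hi2
        simp only
        rw [if_neg (by omega)]
        exact midFormula A B K hinf hxdyn N i hi1 hi2
      exact stability_fill h0 hinf s hs hα _ (by simp) hmid ht
    · -- performance
      intro x w z hx0 hxdyn hzdyn hpos hfin
      have key := HL.2 (fun N => x (tauSeq μ N))
        (fun N jc => w (tauSeq μ N + (jc.1 : ℕ)) jc.2)
        (fun N ir => z (tauSeq μ N + (ir.1 : ℕ)) ir.2)
        (by show x (tauSeq μ 0) = 0; rw [tau_zero h0]; exact hx0)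
        (fun N => bridgeState A B Bw K hinf hxdyn N)
        (fun N => bridgeOutput A B Bw C D Dw K hinf hxdyn hzdyn N)
        (by rw [← tsum_sq_regroup h0 hinf w]; exact hpos)
        (by rw [← tsum_sq_regroup h0 hinf w]; exact hfin)
      rw [tsum_sq_regroup h0 hinf w, tsum_sq_regroup h0 hinf z]
      exact key
end

section
/- Let γ > 0, let S_i, S_j ∈ ℝ^{n×n} be symmetric with S_i positive definite, and let G ∈ ℝ^{n×n}, A ∈ ℝ^{n×n}, B ∈ ℝ^{n×q}, C ∈ ℝ^{p×n}, D ∈ ℝ^{p×q}. If the block matrix [[G + Gᵀ − S_i, 0, (A G)ᵀ, (C G)ᵀ], [0, γ I_q, Bᵀ, Dᵀ], [A G, B, S_j, 0], [C G, D, 0, γ I_p]] is positive definite, then S_j is positive definite and the block matrix [[Aᵀ S_j^{−1} A + γ^{−1} Cᵀ C − S_i^{−1}, Aᵀ S_j^{−1} B + γ^{−1} Cᵀ D], [Bᵀ S_j^{−1} A + γ^{−1} Dᵀ C, Bᵀ S_j^{−1} B + γ^{−1} Dᵀ D − γ I_q]] is negative definite. -/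
open Matrix

section Aux
variable {m k : Type*} [Fintype m] [Fintype k] [DecidableEq m] [DecidableEq k]

-- L1a: 1,1 block posdef
lemma blk11 {A : Matrix m m ℝ} {B : Matrix m k ℝ} {C : Matrix k m ℝ} {D : Matrix k k ℝ}
    (h : (fromBlocks A B C D).PosDef) : A.PosDef := by
  rw [posDef_iff_dotProduct_mulVec]
  constructor
  · have := h.1
    ext i j
    simpa using (congrFun (congrFun this (Sum.inl j)) (Sum.inl i)).symm
  · intro x hx
    have hv : (Sum.elim x 0 : m ⊕ k → ℝ) ≠ 0 := by
      intro hc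
      exact hx (by ext i; exact congrFun hc (Sum.inl i))
    have := h.dotProduct_mulVec_pos hv
    simpa [fromBlocks_mulVec, sumElim_dotProduct_sumElim] using this

lemma blk22 {A : Matrix m m ℝ} {B : Matrix m k ℝ} {C : Matrix k m ℝ} {D : Matrix k k ℝ}
    (h : (fromBlocks A B C D).PosDef) : D.PosDef := by
  rw [posDef_iff_dotProduct_mulVec]
  constructor
  · have := h.1
    ext i j
    simpa using (congrFun (congrFun this (Sum.inr j)) (Sum.inr i)).symm
  · intro x hx
    have hv : (Sum.elim 0 x : m ⊕ k → ℝ) ≠ 0 := by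
      intro hc
      exact hx (by ext i; exact congrFun hc (Sum.inr i))
    have := h.dotProduct_mulVec_pos hv
    simpa [fromBlocks_mulVec, sumElim_dotProduct_sumElim] using this

-- L2: Schur complement posdef
lemma schurPD (A : Matrix m m ℝ) (B : Matrix m k ℝ) {D : Matrix k k ℝ}
    (h : (fromBlocks A B Bᴴ D).PosDef) : (A - B * D⁻¹ * Bᴴ).PosDef := by
  have hD : D.PosDef := blk22 h
  haveI : Invertible D := invertibleOfIsUnitDet D (isUnit_iff_ne_zero.mpr hD.det_pos.ne')
  rw [posDef_iff_dotProduct_mulVec]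
  constructor
  · exact (IsHermitian.fromBlocks₂₂ A B hD.1).mp h.1
  · intro x hx
    have key := schur_complement_eq₂₂ A B x (-((D⁻¹ * Bᴴ) *ᵥ x)) hD.1
    have hv : (Sum.elim x (-((D⁻¹ * Bᴴ) *ᵥ x)) : m ⊕ k → ℝ) ≠ 0 := by
      intro hc
      exact hx (by ext i; exact congrFun hc (Sum.inl i))
    have hpos := h.dotProduct_mulVec_pos hv
    rw [dotProduct_mulVec] at hpos ⊢
    rw [key] at hpos
    simpa using hpos

-- L3: congruence
lemma congPD {N : Matrix m m ℝ} (hN : N.PosDef) (P : Matrix m m ℝ) (hP : IsUnit P.det) :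
    (Pᵀ * N * P).PosDef := by
  rw [posDef_iff_dotProduct_mulVec]
  constructor
  · have hNs : Nᵀ = N := hN.1
    show (Pᵀ * N * P)ᴴ = _
    simp [conjTranspose_eq_transpose_of_trivial, transpose_mul, hNs, Matrix.mul_assoc]
  · intro x hx
    have hPx : P *ᵥ x ≠ 0 := by
      intro hc
      have hd : P.det = 0 := Matrix.exists_mulVec_eq_zero_iff.mp ⟨x, hx, hc⟩
      rw [hd] at hP
      exact not_isUnit_zero hP
    have hpos := hN.dotProduct_mulVec_pos hPx
    have heq : star (P *ᵥ x) ⬝ᵥ N *ᵥ (P *ᵥ x) = star x ⬝ᵥ (Pᵀ * N * P) *ᵥ x := by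
      simp only [star_trivial, dotProduct_mulVec, mulVec_mulVec, Matrix.mul_assoc]
      rw [← vecMul_transpose, Matrix.vecMul_vecMul]
    rwa [heq] at hpos

lemma blkPSD {E : Matrix m m ℝ} (hE : E.PosSemidef) :
    (fromBlocks E 0 0 (0 : Matrix k k ℝ)).PosSemidef := by
  rw [posSemidef_iff_dotProduct_mulVec]
  constructor
  · show _ᴴ = _
    rw [fromBlocks_conjTranspose, hE.1]
    simp
  · intro x
    have hq := hE.dotProduct_mulVec_nonneg (x ∘ Sum.inl)
    have hx : x = Sum.elim (x ∘ Sum.inl) (x ∘ Sum.inr) := (Sum.elim_comp_inl_inr x).symm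
    rw [hx]
    simp only [star_trivial, fromBlocks_mulVec, Matrix.zero_mulVec, add_zero, zero_add,
      sumElim_dotProduct_sumElim, dotProduct_zero]
    simpa using hq

end Aux

/-- the slack-variable LMI implies the dissipation inequality in the
Lyapunov variables S_i⁻¹, S_j⁻¹ (negative definiteness of a matrix M is expressed
as positive definiteness of −M). -/
theorem stmt11
    (n q p : ℕ) (γ : ℝ) (hγ : 0 < γ)
    (Si Sj : Matrix (Fin n) (Fin n) ℝ)
    (hSi : Si.IsSymm) (hSj : Sj.IsSymm) (hSipd : Si.PosDef)
    (G A : Matrix (Fin n) (Fin n) ℝ) (B : Matrix (Fin n) (Fin q) ℝ)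
    (C : Matrix (Fin p) (Fin n) ℝ) (D : Matrix (Fin p) (Fin q) ℝ)
    (hLMI : (Matrix.fromBlocks
        (Matrix.fromBlocks (G + Gᵀ - Si) 0 0 (γ • (1 : Matrix (Fin q) (Fin q) ℝ)))
        (Matrix.fromBlocks (A * G)ᵀ (C * G)ᵀ Bᵀ Dᵀ)
        (Matrix.fromBlocks (A * G) B (C * G) D)
        (Matrix.fromBlocks Sj 0 0 (γ • (1 : Matrix (Fin p) (Fin p) ℝ)))).PosDef) :
    Sj.PosDef ∧
    (-(Matrix.fromBlocks
        (Aᵀ * Sj⁻¹ * A + γ⁻¹ • (Cᵀ * C) - Si⁻¹)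
        (Aᵀ * Sj⁻¹ * B + γ⁻¹ • (Cᵀ * D))
        (Bᵀ * Sj⁻¹ * A + γ⁻¹ • (Dᵀ * C))
        (Bᵀ * Sj⁻¹ * B + γ⁻¹ • (Dᵀ * D) - γ • (1 : Matrix (Fin q) (Fin q) ℝ)))).PosDef := by
  set X : Matrix (Fin n ⊕ Fin q) (Fin n ⊕ Fin q) ℝ :=
    fromBlocks (G + Gᵀ - Si) 0 0 (γ • (1 : Matrix (Fin q) (Fin q) ℝ)) with hXdef
  set Y : Matrix (Fin n ⊕ Fin p) (Fin n ⊕ Fin q) ℝ :=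
    fromBlocks (A * G) B (C * G) D with hYdef
  set Z : Matrix (Fin n ⊕ Fin p) (Fin n ⊕ Fin p) ℝ :=
    fromBlocks Sj 0 0 (γ • (1 : Matrix (Fin p) (Fin p) ℝ)) with hZdef
  have hYt : (fromBlocks (A * G)ᵀ (C * G)ᵀ Bᵀ Dᵀ) = Yᵀ := by
    rw [hYdef, fromBlocks_transpose]
  have hLMI' : (fromBlocks X Yᵀ (Yᵀ)ᴴ Z).PosDef := by
    rwa [conjTranspose_eq_transpose_of_trivial, transpose_transpose, ← hYt] at *
  -- positive definiteness of pieces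
  have hZpd : Z.PosDef := blk22 hLMI'
  have hSjpd : Sj.PosDef := blk11 hZpd
  have hXpd : X.PosDef := blk11 hLMI'
  have hX11 : (G + Gᵀ - Si).PosDef := blk11 hXpd
  have hGGt : (G + Gᵀ).PosDef := by
    have := hX11.add_posSemidef hSipd.posSemidef
    rwa [sub_add_cancel] at this
  -- G is invertible
  have hGdet : IsUnit G.det := by
    rw [isUnit_iff_ne_zero]
    intro h0
    obtain ⟨v, hv, hveq⟩ := Matrix.exists_mulVec_eq_zero_iff.mpr h0
    have hpos := hGGt.dotProduct_mulVec_pos hv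
    rw [add_mulVec, hveq, zero_add, mulVec_transpose, star_trivial] at hpos
    rw [dotProduct_comm, ← dotProduct_mulVec, hveq, dotProduct_zero] at hpos
    exact lt_irrefl _ hpos
  have hSidet : IsUnit Si.det := isUnit_iff_ne_zero.mpr hSipd.det_pos.ne'
  have hSjdet : IsUnit Sj.det := isUnit_iff_ne_zero.mpr hSjpd.det_pos.ne'
  have hGGi : G * G⁻¹ = 1 := mul_nonsing_inv _ hGdet
  have hGit : (G⁻¹)ᵀ * Gᵀ = 1 := by rw [← transpose_mul, hGGi, transpose_one]
  have hGit' : ∀ {k : Type} (M : Matrix (Fin n) k ℝ), (G⁻¹)ᵀ * (Gᵀ * M) = M := by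
    intro k M; rw [← Matrix.mul_assoc, hGit, Matrix.one_mul]
  have hSiSi : Si * Si⁻¹ = 1 := mul_nonsing_inv _ hSidet
  have hSiSi' : Si⁻¹ * Si = 1 := nonsing_inv_mul _ hSidet
  have hSiSi'' : ∀ {k : Type} (M : Matrix (Fin n) k ℝ), Si * (Si⁻¹ * M) = M := by
    intro k M; rw [← Matrix.mul_assoc, hSiSi, Matrix.one_mul]
  -- Schur complement
  have hS : (X - Yᵀ * Z⁻¹ * Y).PosDef := by
    have := schurPD X Yᵀ hLMI'
    rwa [conjTranspose_eq_transpose_of_trivial, transpose_transpose] at this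
  -- inverse of Z
  have hZinv : Z⁻¹ = fromBlocks Sj⁻¹ 0 0 (γ⁻¹ • (1 : Matrix (Fin p) (Fin p) ℝ)) := by
    apply inv_eq_right_inv
    rw [hZdef, fromBlocks_multiply]
    simp [mul_nonsing_inv _ hSjdet, smul_smul, mul_inv_cancel₀ hγ.ne',
      inv_mul_cancel₀ hγ.ne', ← fromBlocks_one]
  -- the slack inequality G + Gᵀ - Si ⪯ Gᵀ Si⁻¹ G
  have hE : ((G - Si)ᵀ * Si⁻¹ * (G - Si)).PosSemidef := by
    have := (hSipd.posSemidef.inv).conjTranspose_mul_mul_same (G - Si)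
    rwa [conjTranspose_eq_transpose_of_trivial] at this
  have hkey0 : (G - Si)ᵀ * Si⁻¹ * (G - Si) = Gᵀ * Si⁻¹ * G - Gᵀ - G + Si := by
    rw [transpose_sub, hSi, Matrix.sub_mul _ _ Si⁻¹, hSiSi, Matrix.sub_mul, Matrix.mul_sub,
      Matrix.mul_sub, Matrix.one_mul, Matrix.mul_assoc Gᵀ Si⁻¹ Si, hSiSi', Matrix.mul_one]
    simp only [Matrix.one_mul]
    abel
  have hkey : Gᵀ * Si⁻¹ * G = (G + Gᵀ - Si) + (G - Si)ᵀ * Si⁻¹ * (G - Si) := by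
    rw [hkey0]; abel
  -- N := fromBlocks (Gᵀ Si⁻¹ G) 0 0 (γ•1) - Yᵀ Z⁻¹ Y is PosDef
  have hN : (fromBlocks (Gᵀ * Si⁻¹ * G) 0 0 (γ • (1 : Matrix (Fin q) (Fin q) ℝ))
      - Yᵀ * Z⁻¹ * Y).PosDef := by
    have hXX : fromBlocks (Gᵀ * Si⁻¹ * G) 0 0 (γ • (1 : Matrix (Fin q) (Fin q) ℝ))
        = X + fromBlocks ((G - Si)ᵀ * Si⁻¹ * (G - Si)) 0 0 0 := by
      rw [hXdef, fromBlocks_add, hkey]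
      congr 1 <;> simp
    rw [hXX, add_sub_right_comm]
    exact hS.add_posSemidef (blkPSD hE)
  -- congruence with P = fromBlocks G⁻¹ 0 0 1
  set P : Matrix (Fin n ⊕ Fin q) (Fin n ⊕ Fin q) ℝ :=
    fromBlocks G⁻¹ 0 0 (1 : Matrix (Fin q) (Fin q) ℝ) with hPdef
  have hPdet : IsUnit P.det := by
    rw [hPdef, det_fromBlocks_zero₂₁, det_one, mul_one, det_nonsing_inv, Ring.inverse_eq_inv]
    exact isUnit_iff_ne_zero.mpr (inv_ne_zero (isUnit_iff_ne_zero.mp hGdet))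
  have hfinal := congPD hN P hPdet
  refine ⟨hSjpd, ?_⟩
  have heq : Pᵀ * (fromBlocks (Gᵀ * Si⁻¹ * G) 0 0 (γ • (1 : Matrix (Fin q) (Fin q) ℝ))
      - Yᵀ * Z⁻¹ * Y) * P =
      -(Matrix.fromBlocks
        (Aᵀ * Sj⁻¹ * A + γ⁻¹ • (Cᵀ * C) - Si⁻¹)
        (Aᵀ * Sj⁻¹ * B + γ⁻¹ • (Cᵀ * D))
        (Bᵀ * Sj⁻¹ * A + γ⁻¹ • (Dᵀ * C))
        (Bᵀ * Sj⁻¹ * B + γ⁻¹ • (Dᵀ * D) - γ • (1 : Matrix (Fin q) (Fin q) ℝ))) := by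
    rw [Matrix.mul_sub, Matrix.sub_mul]
    have E1 : Pᵀ * fromBlocks (Gᵀ * Si⁻¹ * G) 0 0 (γ • (1 : Matrix (Fin q) (Fin q) ℝ)) * P
        = fromBlocks Si⁻¹ 0 0 (γ • (1 : Matrix (Fin q) (Fin q) ℝ)) := by
      rw [hPdef, fromBlocks_transpose, fromBlocks_multiply, fromBlocks_multiply]
      simp [Matrix.mul_assoc, hGGi, hGit']
    have E2 : Pᵀ * (Yᵀ * Z⁻¹ * Y) * P
        = fromBlocks
          (Aᵀ * Sj⁻¹ * A + γ⁻¹ • (Cᵀ * C))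
          (Aᵀ * Sj⁻¹ * B + γ⁻¹ • (Cᵀ * D))
          (Bᵀ * Sj⁻¹ * A + γ⁻¹ • (Dᵀ * C))
          (Bᵀ * Sj⁻¹ * B + γ⁻¹ • (Dᵀ * D)) := by
      rw [hZinv, hYdef, hPdef, fromBlocks_transpose, fromBlocks_transpose]
      rw [fromBlocks_multiply, fromBlocks_multiply, fromBlocks_multiply, fromBlocks_multiply]
      simp [Matrix.mul_assoc, hGGi, hGit', transpose_mul, Matrix.mul_smul, Matrix.smul_mul,
        Matrix.add_mul, Matrix.mul_add, mul_smul_comm, smul_mul_assoc]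
    rw [E1, E2, fromBlocks_neg, sub_eq_add_neg, fromBlocks_neg, fromBlocks_add]
    exact fromBlocks_inj.mpr ⟨by abel, by abel, by abel, by abel⟩
  rwa [heq] at hfinal
end

section
/- Consider a constrained switched linear system (CSS) over a finite label set L with matrices A_l ∈ ℝ^{n×n}, B_l ∈ ℝ^{n×q}, C_l ∈ ℝ^{p×n}, D_l ∈ ℝ^{p×q}, and a switching graph G = (V,E) over L. Suppose γ > 0 and there exist symmetric positive definite matrices P_i ∈ ℝ^{n×n}, i ∈ V, such that for every edge (i,j,l) ∈ E the block matrix [[A_lᵀ P_j A_l + γ^{−1} C_lᵀ C_l − P_i, A_lᵀ P_j B_l + γ^{−1} C_lᵀ D_l], [B_lᵀ P_j A_l + γ^{−1} D_lᵀ C_l, B_lᵀ P_j B_l + γ^{−1} D_lᵀ D_l − γ I_q]] is negative definite. Then the CSS has ℓ2-performance with gain γ with respect to the set of switching sequences admissible for G. -/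
open Matrix Filter Topology

lemma css_dot_transpose {m' k' : Type} [Fintype m'] [Fintype k'] (A : Matrix m' k' ℝ)
    (x : k' → ℝ) (u : m' → ℝ) : x ⬝ᵥ (Aᵀ *ᵥ u) = (A *ᵥ x) ⬝ᵥ u := by
  rw [dotProduct_mulVec, Matrix.vecMul_transpose]

lemma css_dot_self_nonneg {ι : Type} [Fintype ι] (v : ι → ℝ) : 0 ≤ v ⬝ᵥ v :=
  Finset.sum_nonneg fun i _ => mul_self_nonneg (v i)

lemma css_quad_pos {ι : Type} [Fintype ι] {M : Matrix ι ι ℝ} (hM : M.PosDef)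
    {x : ι → ℝ} (hx : x ≠ 0) : 0 < x ⬝ᵥ M *ᵥ x := by
  simpa using hM.dotProduct_mulVec_pos hx

lemma css_quad_nonneg {ι : Type} [Fintype ι] {M : Matrix ι ι ℝ} (hM : M.PosDef)
    (x : ι → ℝ) : 0 ≤ x ⬝ᵥ M *ᵥ x := by
  simpa using hM.posSemidef.dotProduct_mulVec_nonneg x

lemma css_quad_upper {ι : Type} [Fintype ι] (M : Matrix ι ι ℝ) :
    ∃ c > 0, ∀ x : ι → ℝ, x ⬝ᵥ M *ᵥ x ≤ c * (x ⬝ᵥ x) := by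
  refine ⟨(∑ a, ∑ b, |M a b|) + 1, by positivity, fun x => ?_⟩
  have hxx : ∀ a : ι, x a * x a ≤ x ⬝ᵥ x := by
    intro a
    have := Finset.single_le_sum (f := fun i => x i * x i)
      (fun i _ => mul_self_nonneg (x i)) (Finset.mem_univ a)
    simpa [dotProduct] using this
  have hnn : 0 ≤ x ⬝ᵥ x := css_dot_self_nonneg x
  have hrw : x ⬝ᵥ M *ᵥ x = ∑ a, ∑ b, x a * (M a b * x b) := by
    simp [dotProduct, Matrix.mulVec, Finset.mul_sum]
  rw [hrw]
  have hterm : ∀ a b : ι, x a * (M a b * x b) ≤ |M a b| * (x ⬝ᵥ x) := by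
    intro a b
    have h1 : x a * (M a b * x b) ≤ |M a b| * |x a * x b| := by
      calc x a * (M a b * x b) ≤ |x a * (M a b * x b)| := le_abs_self _
        _ = |M a b| * |x a * x b| := by rw [abs_mul, abs_mul, abs_mul]; ring
    have h2 : |x a * x b| ≤ x ⬝ᵥ x := by
      rw [abs_mul]
      nlinarith [hxx a, hxx b, sq_abs (x a), sq_abs (x b), abs_nonneg (x a), abs_nonneg (x b)]
    calc x a * (M a b * x b) ≤ |M a b| * |x a * x b| := h1
      _ ≤ |M a b| * (x ⬝ᵥ x) := mul_le_mul_of_nonneg_left h2 (abs_nonneg _)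
  calc ∑ a, ∑ b, x a * (M a b * x b) ≤ ∑ a, ∑ b, |M a b| * (x ⬝ᵥ x) :=
        Finset.sum_le_sum fun a _ => Finset.sum_le_sum fun b _ => hterm a b
    _ = (∑ a, ∑ b, |M a b|) * (x ⬝ᵥ x) := by rw [Finset.sum_mul]; simp [Finset.sum_mul]
    _ ≤ ((∑ a, ∑ b, |M a b|) + 1) * (x ⬝ᵥ x) := by nlinarith

lemma css_quad_lower {ι : Type} [Fintype ι] {M : Matrix ι ι ℝ} (hM : M.PosDef) :
    ∃ ε > 0, ∀ x : ι → ℝ, ε * (x ⬝ᵥ x) ≤ x ⬝ᵥ M *ᵥ x := by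
  have hpos : ∀ x : ι → ℝ, x ≠ 0 → 0 < x ⬝ᵥ M *ᵥ x := fun x hx => css_quad_pos hM hx
  rcases isEmpty_or_nonempty ι with hι | hι
  · refine ⟨1, one_pos, fun x => ?_⟩
    simp [dotProduct]
  · set f : (ι → ℝ) → ℝ := fun y => y ⬝ᵥ M *ᵥ y with hf_def
    have hf : Continuous f := by
      have : f = fun y => ∑ i, y i * ∑ j, M i j * y j := by
        funext y
        simp [hf_def, dotProduct, Matrix.mulVec]
      rw [this]
      exact continuous_finset_sum _ fun i _ =>
        (continuous_apply i).mul (continuous_finset_sum _ fun j _ =>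
          continuous_const.mul (continuous_apply j))
    have hne : (Metric.sphere (0 : ι → ℝ) 1).Nonempty :=
      NormedSpace.sphere_nonempty.2 zero_le_one
    obtain ⟨y0, hy0, hmin⟩ :=
      (isCompact_sphere (0 : ι → ℝ) 1).exists_isMinOn hne hf.continuousOn
    rw [isMinOn_iff] at hmin
    have hy0ne : y0 ≠ 0 := by
      intro h
      rw [mem_sphere_zero_iff_norm, h, norm_zero] at hy0
      norm_num at hy0
    have hε0 : 0 < f y0 := hpos y0 hy0ne
    have hcard : 0 < (Fintype.card ι : ℝ) := by
      exact_mod_cast Fintype.card_pos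
    refine ⟨f y0 / Fintype.card ι, by positivity, fun x => ?_⟩
    by_cases hx : x = 0
    · simp [hx]
    · have ht : 0 < ‖x‖ := norm_pos_iff.2 hx
      set y : ι → ℝ := ‖x‖⁻¹ • x with hy_def
      have hy : y ∈ Metric.sphere (0 : ι → ℝ) 1 := by
        rw [mem_sphere_zero_iff_norm, hy_def, norm_smul, norm_inv, norm_norm]
        field_simp
      have hfy : f y = ‖x‖⁻¹ * (‖x‖⁻¹ * f x) := by
        simp only [hf_def, hy_def, Matrix.mulVec_smul, smul_dotProduct, dotProduct_smul,
          smul_eq_mul]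
      have h1 : f y0 ≤ f y := hmin y hy
      have h2 : f y0 * ‖x‖ ^ 2 ≤ f x := by
        rw [hfy] at h1
        have := mul_le_mul_of_nonneg_left h1 (le_of_lt (mul_pos ht ht))
        calc f y0 * ‖x‖ ^ 2 = ‖x‖ * ‖x‖ * f y0 := by ring
          _ ≤ ‖x‖ * ‖x‖ * (‖x‖⁻¹ * (‖x‖⁻¹ * f x)) := this
          _ = f x := by field_simp
      have h3 : x ⬝ᵥ x ≤ (Fintype.card ι : ℝ) * ‖x‖ ^ 2 := by
        have hco : ∀ i : ι, x i * x i ≤ ‖x‖ ^ 2 := by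
          intro i
          have h0 : |x i| ≤ ‖x‖ := by simpa using norm_le_pi_norm x i
          nlinarith [abs_nonneg (x i), sq_abs (x i)]
        calc x ⬝ᵥ x = ∑ i, x i * x i := rfl
          _ ≤ ∑ _i : ι, ‖x‖ ^ 2 := Finset.sum_le_sum fun i _ => hco i
          _ = (Fintype.card ι : ℝ) * ‖x‖ ^ 2 := by
              simp [Finset.sum_const, nsmul_eq_mul]
      show f y0 / (Fintype.card ι : ℝ) * (x ⬝ᵥ x) ≤ f x
      calc f y0 / (Fintype.card ι : ℝ) * (x ⬝ᵥ x)
          ≤ f y0 / (Fintype.card ι : ℝ) * ((Fintype.card ι : ℝ) * ‖x‖ ^ 2) :=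
            mul_le_mul_of_nonneg_left h3 (by positivity)
        _ = f y0 * ‖x‖ ^ 2 := by field_simp
        _ ≤ f x := h2

lemma css_key_expand {n q p : ℕ} (A : Matrix (Fin n) (Fin n) ℝ) (B : Matrix (Fin n) (Fin q) ℝ)
    (C : Matrix (Fin p) (Fin n) ℝ) (D : Matrix (Fin p) (Fin q) ℝ)
    (Pi Pj : Matrix (Fin n) (Fin n) ℝ) (γ : ℝ) (x : Fin n → ℝ) (w : Fin q → ℝ) :
    (Sum.elim x w) ⬝ᵥ (Matrix.fromBlocks
        (Aᵀ * Pj * A + γ⁻¹ • (Cᵀ * C) - Pi)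
        (Aᵀ * Pj * B + γ⁻¹ • (Cᵀ * D))
        (Bᵀ * Pj * A + γ⁻¹ • (Dᵀ * C))
        (Bᵀ * Pj * B + γ⁻¹ • (Dᵀ * D) - γ • (1 : Matrix (Fin q) (Fin q) ℝ))) *ᵥ (Sum.elim x w)
    = (A *ᵥ x + B *ᵥ w) ⬝ᵥ Pj *ᵥ (A *ᵥ x + B *ᵥ w)
      + γ⁻¹ * ((C *ᵥ x + D *ᵥ w) ⬝ᵥ (C *ᵥ x + D *ᵥ w))
      - x ⬝ᵥ Pi *ᵥ x - γ * (w ⬝ᵥ w) := by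
  rw [Matrix.fromBlocks_mulVec, sumElim_dotProduct_sumElim]
  simp only [Matrix.add_mulVec, Matrix.sub_mulVec, Matrix.mulVec_add, Matrix.smul_mulVec,
    dotProduct_add, dotProduct_sub, dotProduct_smul,
    add_dotProduct, ← Matrix.mulVec_mulVec, css_dot_transpose,
    Matrix.one_mulVec, smul_eq_mul, Sum.elim_comp_inl, Sum.elim_comp_inr]
  ring


/-- ℓ2-performance analysis of a constrained switched linear system
via node-dependent quadratic Lyapunov certificates P_i (negative definiteness of a
matrix M is expressed as positive definiteness of −M). -/
theorem stmt12
    (L : Type) [Fintype L]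
    (n q p nV : ℕ)
    (A : L → Matrix (Fin n) (Fin n) ℝ)
    (B : L → Matrix (Fin n) (Fin q) ℝ)
    (C : L → Matrix (Fin p) (Fin n) ℝ)
    (D : L → Matrix (Fin p) (Fin q) ℝ)
    (E : Set (Fin nV × Fin nV × L))
    (hout : ∀ i : Fin nV, ∃ j l, (i, j, l) ∈ E)
    (hin : ∀ j : Fin nV, ∃ i l, (i, j, l) ∈ E)
    (γ : ℝ) (hγ : 0 < γ)
    (P : Fin nV → Matrix (Fin n) (Fin n) ℝ)
    (hPsymm : ∀ i, (P i).IsSymm)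
    (hPpd : ∀ i, (P i).PosDef)
    (hLMI : ∀ i j l, (i, j, l) ∈ E →
      (-(Matrix.fromBlocks
          ((A l)ᵀ * P j * A l + γ⁻¹ • ((C l)ᵀ * C l) - P i)
          ((A l)ᵀ * P j * B l + γ⁻¹ • ((C l)ᵀ * D l))
          ((B l)ᵀ * P j * A l + γ⁻¹ • ((D l)ᵀ * C l))
          ((B l)ᵀ * P j * B l + γ⁻¹ • ((D l)ᵀ * D l) -
            γ • (1 : Matrix (Fin q) (Fin q) ℝ)))).PosDef) :
    ∀ σ : ℕ → L,
      (∃ v : ℕ → Fin nV, ∀ k, (v k, v (k + 1), σ k) ∈ E) →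
      -- (i) internal (asymptotic) stability for zero performance input
      ((∀ x : ℕ → Fin n → ℝ,
          (∀ k, x (k + 1) = (A (σ k)).mulVec (x k)) →
          Tendsto x atTop (nhds 0)) ∧
      -- (ii) ℓ2-gain bound for zero initial state
       (∀ (x : ℕ → Fin n → ℝ) (w : ℕ → Fin q → ℝ) (z : ℕ → Fin p → ℝ),
          x 0 = 0 →
          (∀ k, x (k + 1) = (A (σ k)).mulVec (x k) + (B (σ k)).mulVec (w k)) →
          (∀ k, z k = (C (σ k)).mulVec (x k) + (D (σ k)).mulVec (w k)) →
          0 < ∑' k, ENNReal.ofReal (∑ i, (w k i) ^ 2) →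
          (∑' k, ENNReal.ofReal (∑ i, (w k i) ^ 2)) < ⊤ →
          (∑' k, ENNReal.ofReal (∑ i, (z k i) ^ 2)) <
            ENNReal.ofReal γ ^ 2 * ∑' k, ENNReal.ofReal (∑ i, (w k i) ^ 2))) := by
  intro σ hσ
  obtain ⟨v, hv⟩ := hσ
  classical
  haveI : Nonempty (Fin nV) := ⟨v 0⟩
  -- the negated block matrix for an edge
  set NB : Fin nV × Fin nV × L → Matrix (Fin n ⊕ Fin q) (Fin n ⊕ Fin q) ℝ := fun e =>
    -(Matrix.fromBlocks
        ((A e.2.2)ᵀ * P e.2.1 * A e.2.2 + γ⁻¹ • ((C e.2.2)ᵀ * C e.2.2) - P e.1)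
        ((A e.2.2)ᵀ * P e.2.1 * B e.2.2 + γ⁻¹ • ((C e.2.2)ᵀ * D e.2.2))
        ((B e.2.2)ᵀ * P e.2.1 * A e.2.2 + γ⁻¹ • ((D e.2.2)ᵀ * C e.2.2))
        ((B e.2.2)ᵀ * P e.2.1 * B e.2.2 + γ⁻¹ • ((D e.2.2)ᵀ * D e.2.2) -
          γ • (1 : Matrix (Fin q) (Fin q) ℝ))) with hNB_def
  have hNpd : ∀ e ∈ E, (NB e).PosDef := fun e he => hLMI e.1 e.2.1 e.2.2 he
  -- the fundamental dissipation identity along an edge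
  have hdiss : ∀ k (xx : Fin n → ℝ) (ww : Fin q → ℝ),
      (A (σ k) *ᵥ xx + B (σ k) *ᵥ ww) ⬝ᵥ P (v (k+1)) *ᵥ (A (σ k) *ᵥ xx + B (σ k) *ᵥ ww)
        + γ⁻¹ * ((C (σ k) *ᵥ xx + D (σ k) *ᵥ ww) ⬝ᵥ (C (σ k) *ᵥ xx + D (σ k) *ᵥ ww))
        - xx ⬝ᵥ P (v k) *ᵥ xx - γ * (ww ⬝ᵥ ww)
      = -((Sum.elim xx ww) ⬝ᵥ (NB (v k, v (k+1), σ k)) *ᵥ (Sum.elim xx ww)) := by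
    intro k xx ww
    rw [hNB_def]
    simp only [Matrix.neg_mulVec, dotProduct_neg, neg_neg]
    exact (css_key_expand (A (σ k)) (B (σ k)) (C (σ k)) (D (σ k))
      (P (v k)) (P (v (k+1))) γ xx ww).symm
  constructor
  · -- part (i): asymptotic stability
    intro x hdyn
    -- uniform lower bound over edges
    have hEfin : E.Finite := Set.toFinite E
    set εf : Fin nV × Fin nV × L → ℝ := fun e =>
      if he : e ∈ E then (css_quad_lower (hNpd e he)).choose else 1 with hεf_def
    have hεf_pos : ∀ e ∈ E, 0 < εf e := by
      intro e he
      simp only [hεf_def, dif_pos he]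
      exact (css_quad_lower (hNpd e he)).choose_spec.1
    have hεf_bd : ∀ e (he : e ∈ E) (u : Fin n ⊕ Fin q → ℝ),
        εf e * (u ⬝ᵥ u) ≤ u ⬝ᵥ (NB e) *ᵥ u := by
      intro e he u
      simp only [hεf_def, dif_pos he]
      exact (css_quad_lower (hNpd e he)).choose_spec.2 u
    have hEne : hEfin.toFinset.Nonempty :=
      ⟨(v 0, v 1, σ 0), (Set.Finite.mem_toFinset hEfin).2 (hv 0)⟩
    set ε : ℝ := hEfin.toFinset.inf' hEne εf with hε_def
    have hε_pos : 0 < ε := by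
      rw [hε_def, Finset.lt_inf'_iff]
      intro e he
      exact hεf_pos e ((Set.Finite.mem_toFinset hEfin).1 he)
    have hε_le : ∀ e ∈ E, ε ≤ εf e := fun e he =>
      Finset.inf'_le εf ((Set.Finite.mem_toFinset hEfin).2 he)
    -- uniform upper and lower bounds for the P i
    set cf : Fin nV → ℝ := fun i => (css_quad_upper (P i)).choose with hcf_def
    set c : ℝ := Finset.univ.sup' Finset.univ_nonempty cf with hc_def
    have hc_pos : 0 < c := by
      rw [hc_def, Finset.lt_sup'_iff]
      exact ⟨v 0, Finset.mem_univ _, (css_quad_upper (P (v 0))).choose_spec.1⟩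
    have hc_bd : ∀ i (y : Fin n → ℝ), y ⬝ᵥ P i *ᵥ y ≤ c * (y ⬝ᵥ y) := by
      intro i y
      calc y ⬝ᵥ P i *ᵥ y ≤ cf i * (y ⬝ᵥ y) := (css_quad_upper (P i)).choose_spec.2 y
        _ ≤ c * (y ⬝ᵥ y) := by
            apply mul_le_mul_of_nonneg_right _ (css_dot_self_nonneg y)
            exact Finset.le_sup' cf (Finset.mem_univ i)
    set mf : Fin nV → ℝ := fun i => (css_quad_lower (hPpd i)).choose with hmf_def
    set mm : ℝ := Finset.univ.inf' Finset.univ_nonempty mf with hmm_def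
    have hmm_pos : 0 < mm := by
      rw [hmm_def, Finset.lt_inf'_iff]
      exact fun i _ => (css_quad_lower (hPpd i)).choose_spec.1
    have hmm_bd : ∀ i (y : Fin n → ℝ), mm * (y ⬝ᵥ y) ≤ y ⬝ᵥ P i *ᵥ y := by
      intro i y
      calc mm * (y ⬝ᵥ y) ≤ mf i * (y ⬝ᵥ y) := by
            apply mul_le_mul_of_nonneg_right _ (css_dot_self_nonneg y)
            exact Finset.inf'_le mf (Finset.mem_univ i)
        _ ≤ y ⬝ᵥ P i *ᵥ y := (css_quad_lower (hPpd i)).choose_spec.2 y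
    set V : ℕ → ℝ := fun k => x k ⬝ᵥ P (v k) *ᵥ x k with hV_def
    have hVnn : ∀ k, 0 ≤ V k := fun k => css_quad_nonneg (hPpd (v k)) (x k)
    -- one-step decrease
    have hstep : ∀ k, V (k+1) ≤ V k - ε * (x k ⬝ᵥ x k) := by
      intro k
      have hx' : x (k+1) = A (σ k) *ᵥ x k + B (σ k) *ᵥ (0 : Fin q → ℝ) := by
        rw [hdyn k]; simp
      have hkey := hdiss k (x k) (0 : Fin q → ℝ)
      have hbd := hεf_bd (v k, v (k+1), σ k) (hv k) (Sum.elim (x k) 0)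
      have hεle := hε_le (v k, v (k+1), σ k) (hv k)
      have huu : (Sum.elim (x k) (0 : Fin q → ℝ)) ⬝ᵥ (Sum.elim (x k) 0) = x k ⬝ᵥ x k := by
        rw [sumElim_dotProduct_sumElim]; simp
      rw [huu] at hbd
      have hznn : 0 ≤ γ⁻¹ * ((C (σ k) *ᵥ x k + D (σ k) *ᵥ (0 : Fin q → ℝ)) ⬝ᵥ
          (C (σ k) *ᵥ x k + D (σ k) *ᵥ (0 : Fin q → ℝ))) := by
        apply mul_nonneg (by positivity) (css_dot_self_nonneg _)
      have hxxnn : 0 ≤ x k ⬝ᵥ x k := css_dot_self_nonneg (x k)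
      have h1 : ε * (x k ⬝ᵥ x k) ≤ εf (v k, v (k+1), σ k) * (x k ⬝ᵥ x k) :=
        mul_le_mul_of_nonneg_right hεle hxxnn
      have hVk1 : V (k+1) = (A (σ k) *ᵥ x k + B (σ k) *ᵥ (0 : Fin q → ℝ)) ⬝ᵥ
          P (v (k+1)) *ᵥ (A (σ k) *ᵥ x k + B (σ k) *ᵥ (0 : Fin q → ℝ)) := by
        simp only [hV_def]
        rw [hx']
      rw [hVk1]
      have hw0 : (0 : Fin q → ℝ) ⬝ᵥ (0 : Fin q → ℝ) = 0 := by simp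
      have hVk : V k = x k ⬝ᵥ P (v k) *ᵥ x k := rfl
      have hw0' : γ * ((0 : Fin q → ℝ) ⬝ᵥ (0 : Fin q → ℝ)) = 0 := by simp
      linarith [hkey, hbd, h1, hznn, hw0', hVk]
    -- geometric decay
    set ρ : ℝ := max (1 - ε / c) 0 with hρ_def
    have hρ0 : 0 ≤ ρ := le_max_right _ _
    have hρ1 : ρ < 1 := by
      rw [hρ_def, max_lt_iff]
      constructor
      · have : 0 < ε / c := div_pos hε_pos hc_pos
        linarith
      · norm_num
    have hcontr : ∀ k, V (k+1) ≤ ρ * V k := by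
      intro k
      have h1 : V k ≤ c * (x k ⬝ᵥ x k) := hc_bd (v k) (x k)
      have h2 : (ε / c) * V k ≤ ε * (x k ⬝ᵥ x k) := by
        have := mul_le_mul_of_nonneg_left h1 (le_of_lt (div_pos hε_pos hc_pos))
        calc (ε / c) * V k ≤ (ε / c) * (c * (x k ⬝ᵥ x k)) := this
          _ = ε * (x k ⬝ᵥ x k) := by field_simp
      have h3 : V (k+1) ≤ (1 - ε / c) * V k := by
        have := hstep k
        nlinarith
      calc V (k+1) ≤ (1 - ε / c) * V k := h3
        _ ≤ ρ * V k := mul_le_mul_of_nonneg_right (le_max_left _ _) (hVnn k)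
    have hdecay : ∀ k, V k ≤ ρ ^ k * V 0 := by
      intro k
      induction k with
      | zero => simp
      | succ k ih =>
        calc V (k+1) ≤ ρ * V k := hcontr k
          _ ≤ ρ * (ρ ^ k * V 0) := mul_le_mul_of_nonneg_left ih hρ0
          _ = ρ ^ (k+1) * V 0 := by ring
    have hlim : Tendsto (fun k => ρ ^ k * V 0 / mm) atTop (nhds 0) := by
      have h1 : Tendsto (fun k : ℕ => ρ ^ k) atTop (nhds 0) :=
        tendsto_pow_atTop_nhds_zero_of_lt_one hρ0 hρ1
      have h2 := h1.mul_const (V 0 / mm)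
      simpa [mul_div_assoc] using h2
    have hxx_lim : Tendsto (fun k => x k ⬝ᵥ x k) atTop (nhds 0) := by
      apply tendsto_of_tendsto_of_tendsto_of_le_of_le tendsto_const_nhds hlim
      · exact fun k => css_dot_self_nonneg (x k)
      · intro k
        have h1 : mm * (x k ⬝ᵥ x k) ≤ V k := hmm_bd (v k) (x k)
        have h2 : V k ≤ ρ ^ k * V 0 := hdecay k
        rw [le_div_iff₀ hmm_pos]
        linarith
    rw [tendsto_pi_nhds]
    intro i
    have hsq : Tendsto (fun k => (x k i) ^ 2) atTop (nhds 0) := by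
      apply tendsto_of_tendsto_of_tendsto_of_le_of_le tendsto_const_nhds hxx_lim
      · exact fun k => sq_nonneg _
      · intro k
        have := Finset.single_le_sum (f := fun j => x k j * x k j)
          (fun j _ => mul_self_nonneg (x k j)) (Finset.mem_univ i)
        calc (x k i) ^ 2 = x k i * x k i := by ring
          _ ≤ ∑ j, x k j * x k j := this
          _ = x k ⬝ᵥ x k := rfl
    have habs : Tendsto (fun k => |x k i|) atTop (nhds 0) := by
      have := (Real.continuous_sqrt.tendsto 0).comp hsq
      simpa [Function.comp_def, Real.sqrt_sq_eq_abs] using this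
    have hnegabs : Tendsto (fun k => -|x k i|) atTop (nhds 0) := by
      simpa using habs.neg
    have : Tendsto (fun k => x k i) atTop (nhds 0) := by
      apply tendsto_of_tendsto_of_tendsto_of_le_of_le hnegabs habs
      · exact fun k => neg_abs_le _
      · exact fun k => le_abs_self _
    simpa using this
  · -- part (ii): ℓ2 gain
    intro x w z hx0 hdyn hz hwpos hwfin
    set V : ℕ → ℝ := fun k => x k ⬝ᵥ P (v k) *ᵥ x k with hV_def
    have hVnn : ∀ k, 0 ≤ V k := fun k => css_quad_nonneg (hPpd (v k)) (x k)
    set u : ℕ → (Fin n ⊕ Fin q → ℝ) := fun k => Sum.elim (x k) (w k) with hu_def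
    set δ : ℕ → ℝ := fun k => u k ⬝ᵥ (NB (v k, v (k+1), σ k)) *ᵥ u k with hδ_def
    have hδnn : ∀ k, 0 ≤ δ k := fun k =>
      css_quad_nonneg (hNpd _ (hv k)) (u k)
    have hdot_w : ∀ k, w k ⬝ᵥ w k = ∑ i, (w k i) ^ 2 := by
      intro k; simp [dotProduct, sq]
    have hdot_z : ∀ k, z k ⬝ᵥ z k = ∑ i, (z k i) ^ 2 := by
      intro k; simp [dotProduct, sq]
    -- one-step dissipation equality
    have hstep : ∀ k, V (k+1) + γ⁻¹ * (z k ⬝ᵥ z k) = V k + γ * (w k ⬝ᵥ w k) - δ k := by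
      intro k
      have hkey := hdiss k (x k) (w k)
      rw [← hdyn k, ← hz k] at hkey
      rw [hV_def]
      simp only [hδ_def, hu_def]
      linarith [hkey]
    -- summed dissipation inequality
    have hsum : ∀ N, V N + ∑ k ∈ Finset.range N, (γ⁻¹ * (z k ⬝ᵥ z k) + δ k)
        ≤ γ * ∑ k ∈ Finset.range N, (w k ⬝ᵥ w k) := by
      intro N
      induction N with
      | zero =>
        simp [hV_def, hx0]
      | succ N ih =>
        rw [Finset.sum_range_succ, Finset.sum_range_succ]
        have := hstep N
        have h2 : γ * ∑ k ∈ Finset.range (N+1), (w k ⬝ᵥ w k)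
            = γ * ∑ k ∈ Finset.range N, (w k ⬝ᵥ w k) + γ * (w N ⬝ᵥ w N) := by
          rw [Finset.sum_range_succ]; ring
        linarith
    -- total weighted input energy
    set S : ENNReal := ∑' k, ENNReal.ofReal (∑ i, (w k i) ^ 2) with hS_def
    set W : ℝ := S.toReal with hW_def
    have hW_pos : 0 < W := ENNReal.toReal_pos hwpos.ne' hwfin.ne
    have hwsum_le : ∀ N, ∑ k ∈ Finset.range N, (w k ⬝ᵥ w k) ≤ W := by
      intro N
      have h1 : ENNReal.ofReal (∑ k ∈ Finset.range N, (w k ⬝ᵥ w k))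
          = ∑ k ∈ Finset.range N, ENNReal.ofReal (∑ i, (w k i) ^ 2) := by
        rw [ENNReal.ofReal_sum_of_nonneg]
        · exact Finset.sum_congr rfl fun k _ => by rw [hdot_w k]
        · exact fun k _ => css_dot_self_nonneg (w k)
      have h2 : (∑ k ∈ Finset.range N, ENNReal.ofReal (∑ i, (w k i) ^ 2)) ≤ S :=
        ENNReal.sum_le_tsum _
      rw [← h1] at h2
      exact (ENNReal.ofReal_le_iff_le_toReal hwfin.ne).1 h2
    -- find an index with nonzero input
    have hk0 : ∃ k0, w k0 ≠ 0 := by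
      by_contra h
      push_neg at h
      have : ∀ k, ENNReal.ofReal (∑ i, (w k i) ^ 2) = 0 := by
        intro k
        simp [h k]
      rw [hS_def] at hwpos
      simp only [this, tsum_zero] at hwpos
      exact lt_irrefl _ hwpos
    obtain ⟨k0, hk0⟩ := hk0
    have hδk0 : 0 < δ k0 := by
      apply css_quad_pos (hNpd _ (hv k0))
      intro h
      apply hk0
      funext i
      have := congrFun h (Sum.inr i)
      simpa [hu_def] using this
    -- bound on the partial output sums
    have hzsum_le : ∀ N, ∑ k ∈ Finset.range N, (z k ⬝ᵥ z k) ≤ γ ^ 2 * W - γ * δ k0 := by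
      intro N
      -- monotonicity: enough for N' = max N (k0+1)
      have key : ∀ N', k0 < N' → ∑ k ∈ Finset.range N', (z k ⬝ᵥ z k) ≤ γ ^ 2 * W - γ * δ k0 := by
        intro N' hN'
        have h1 := hsum N'
        have h2 : δ k0 ≤ ∑ k ∈ Finset.range N', δ k :=
          Finset.single_le_sum (fun k _ => hδnn k) (Finset.mem_range.2 hN')
        have h3 : ∑ k ∈ Finset.range N', (γ⁻¹ * (z k ⬝ᵥ z k) + δ k)
            = γ⁻¹ * ∑ k ∈ Finset.range N', (z k ⬝ᵥ z k) + ∑ k ∈ Finset.range N', δ k := by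
          rw [Finset.sum_add_distrib, Finset.mul_sum]
        have h4 : γ⁻¹ * ∑ k ∈ Finset.range N', (z k ⬝ᵥ z k) + δ k0 ≤ γ * W := by
          have h5 := hwsum_le N'
          have h6 : γ * ∑ k ∈ Finset.range N', (w k ⬝ᵥ w k) ≤ γ * W :=
            mul_le_mul_of_nonneg_left h5 hγ.le
          rw [h3] at h1
          linarith [hVnn N']
        have h8 := mul_le_mul_of_nonneg_left h4 hγ.le
        have h9 : γ * (γ⁻¹ * ∑ k ∈ Finset.range N', (z k ⬝ᵥ z k) + δ k0)
            = (∑ k ∈ Finset.range N', (z k ⬝ᵥ z k)) + γ * δ k0 := by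
          field_simp
        rw [h9] at h8
        have h10 : γ * (γ * W) = γ ^ 2 * W := by ring
        linarith
      rcases le_or_gt N (k0 + 1) with h | h
      · calc ∑ k ∈ Finset.range N, (z k ⬝ᵥ z k) ≤ ∑ k ∈ Finset.range (k0+1), (z k ⬝ᵥ z k) := by
              apply Finset.sum_le_sum_of_subset_of_nonneg
              · exact Finset.range_subset_range.2 h
              · exact fun k _ _ => css_dot_self_nonneg (z k)
          _ ≤ γ ^ 2 * W - γ * δ k0 := key (k0+1) (Nat.lt_succ_self k0)
      · exact key N (by omega)
    -- conclude in ℝ≥0∞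
    have htsum_le : (∑' k, ENNReal.ofReal (∑ i, (z k i) ^ 2))
        ≤ ENNReal.ofReal (γ ^ 2 * W - γ * δ k0) := by
      rw [ENNReal.tsum_eq_iSup_sum]
      apply iSup_le
      intro s
      obtain ⟨N, hN⟩ := Finset.exists_nat_subset_range s
      calc ∑ k ∈ s, ENNReal.ofReal (∑ i, (z k i) ^ 2)
          ≤ ∑ k ∈ Finset.range N, ENNReal.ofReal (∑ i, (z k i) ^ 2) :=
            Finset.sum_le_sum_of_subset hN
        _ = ENNReal.ofReal (∑ k ∈ Finset.range N, ∑ i, (z k i) ^ 2) := by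
            rw [ENNReal.ofReal_sum_of_nonneg]
            exact fun k _ => Finset.sum_nonneg fun i _ => sq_nonneg _
        _ ≤ ENNReal.ofReal (γ ^ 2 * W - γ * δ k0) := by
            apply ENNReal.ofReal_le_ofReal
            have := hzsum_le N
            calc ∑ k ∈ Finset.range N, ∑ i, (z k i) ^ 2
                = ∑ k ∈ Finset.range N, (z k ⬝ᵥ z k) :=
                  Finset.sum_congr rfl fun k _ => (hdot_z k).symm
              _ ≤ γ ^ 2 * W - γ * δ k0 := this
    have hRHS : ENNReal.ofReal γ ^ 2 * S = ENNReal.ofReal (γ ^ 2 * W) := by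
      rw [← ENNReal.ofReal_pow hγ.le]
      rw [show S = ENNReal.ofReal W by rw [hW_def, ENNReal.ofReal_toReal hwfin.ne]]
      rw [← ENNReal.ofReal_mul (by positivity)]
    rw [hRHS]
    apply lt_of_le_of_lt htsum_le
    rw [ENNReal.ofReal_lt_ofReal_iff (by positivity)]
    nlinarith [hδk0, hγ]
end
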